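/- arXiv:1310.1110 — 4 statements merged into one kernel-verified Lean document; each statement's English description precedes it below -/
import Mathlib

section
/- Let ρ_AB, ρ_AC, ρ_BC be fully classical bipartite density matrices on a tripartite system (each diagonal in some product basis of its two factors), with matching single-party marginals. If all the commutators [ρ_AB ⊗ I_C, ρ_AC ⊗ I_B], [ρ_AB ⊗ I_C, ρ_BC ⊗ I_A], and [ρ_AC ⊗ I_B, ρ_BC ⊗ I_A] (with operators appropriately embedded in H_A ⊗ H_B ⊗ H_C) vanish, then there exist orthonormal bases {|a_i⟩} of H_A, {|b_j⟩} of H_B, {|c_k⟩} of H_C and probability distributions p, q, r such that ρ_AB = Σ_{ij} p_{ij}|a_i b_j⟩⟨a_i b_j|, ρ_BC = Σ_{jk} q_{jk}|b_j c_k⟩⟨b_j c_k|, and ρ_AC = Σ_{ik} r_{ik}|a_i c_k⟩⟨a_i c_k|. -/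
open Matrix BigOperators
open scoped Kronecker ComplexOrder

namespace QMarginal

abbrev Mat (n : ℕ) := Matrix (Fin n) (Fin n) ℂ
abbrev Bip (m n : ℕ) := Matrix (Fin m × Fin n) (Fin m × Fin n) ℂ
abbrev Tri (dA dB dC : ℕ) := Matrix (Fin dA × Fin dB × Fin dC) (Fin dA × Fin dB × Fin dC) ℂ

/-- partial trace over the third system -/
noncomputable def trC {dA dB dC : ℕ} (ρ : Tri dA dB dC) : Bip dA dB :=
  fun x y => ∑ c : Fin dC, ρ (x.1, x.2, c) (y.1, y.2, c)

/-- partial trace over the second system -/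
noncomputable def trB {dA dB dC : ℕ} (ρ : Tri dA dB dC) : Bip dA dC :=
  fun x y => ∑ b : Fin dB, ρ (x.1, b, x.2) (y.1, b, y.2)

/-- partial trace over the first system -/
noncomputable def trA {dA dB dC : ℕ} (ρ : Tri dA dB dC) : Bip dB dC :=
  fun x y => ∑ a : Fin dA, ρ (a, x.1, x.2) (a, y.1, y.2)

/-- partial trace of a bipartite matrix over the right factor -/
noncomputable def trR {m n : ℕ} (ρ : Bip m n) : Mat m :=
  fun i j => ∑ b : Fin n, ρ (i, b) (j, b)

/-- partial trace of a bipartite matrix over the left factor -/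
noncomputable def trL {m n : ℕ} (ρ : Bip m n) : Mat n :=
  fun i j => ∑ a : Fin m, ρ (a, i) (a, j)

def IsDensity {ι : Type*} [Fintype ι] [DecidableEq ι] (ρ : Matrix ι ι ℂ) : Prop :=
  ρ.PosSemidef ∧ ρ.trace = 1

/-- rank-one projector onto a vector -/
def projV {ι : Type*} (v : ι → ℂ) : Matrix ι ι ℂ := fun i j => v i * star (v j)

def prod2 {m n : ℕ} (v : Fin m → ℂ) (w : Fin n → ℂ) : Fin m × Fin n → ℂ :=
  fun x => v x.1 * w x.2

def prod3 {dA dB dC : ℕ} (u : Fin dA → ℂ) (v : Fin dB → ℂ) (w : Fin dC → ℂ) :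
    Fin dA × Fin dB × Fin dC → ℂ :=
  fun x => u x.1 * v x.2.1 * w x.2.2

/-- a family of vectors forming an orthonormal basis -/
def ONB {n : ℕ} (a : Fin n → Fin n → ℂ) : Prop :=
  ∀ i j, (∑ k, star (a i k) * a j k) = if i = j then (1:ℂ) else 0

/-- fully classical bipartite state -/
def FullyClassical {m n : ℕ} (ρ : Bip m n) : Prop :=
  ∃ (a : Fin m → Fin m → ℂ) (b : Fin n → Fin n → ℂ) (p : Fin m → Fin n → ℝ),
    ONB a ∧ ONB b ∧ (∀ i j, 0 ≤ p i j) ∧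
    ρ = ∑ i, ∑ j, (p i j) • projV (prod2 (a i) (b j))

/-- fully classical tripartite state -/
def FullyClassicalTri {dA dB dC : ℕ} (ρ : Tri dA dB dC) : Prop :=
  ∃ (a : Fin dA → Fin dA → ℂ) (b : Fin dB → Fin dB → ℂ) (c : Fin dC → Fin dC → ℂ)
    (f : Fin dA → Fin dB → Fin dC → ℝ),
    ONB a ∧ ONB b ∧ ONB c ∧ (∀ i j k, 0 ≤ f i j k) ∧
    ρ = ∑ i, ∑ j, ∑ k, (f i j k) • projV (prod3 (a i) (b j) (c k))

/-- fully separable tripartite state -/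
def FullySepTri {dA dB dC : ℕ} (ρ : Tri dA dB dC) : Prop :=
  ∃ (N : ℕ) (p : Fin N → ℝ) (u : Fin N → Fin dA → ℂ) (v : Fin N → Fin dB → ℂ)
    (w : Fin N → Fin dC → ℂ),
    (∀ i, 0 ≤ p i) ∧ ρ = ∑ i, (p i) • projV (prod3 (u i) (v i) (w i))

/-- M ⊗ I_C on the tripartite space, M acting on A ⊗ B -/
def embAB {dA dB : ℕ} (M : Bip dA dB) (dC : ℕ) : Tri dA dB dC :=
  fun x y => M (x.1, x.2.1) (y.1, y.2.1) * (if x.2.2 = y.2.2 then 1 else 0)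

/-- M ⊗ I_B on the tripartite space, M acting on A ⊗ C -/
def embAC {dA dC : ℕ} (M : Bip dA dC) (dB : ℕ) : Tri dA dB dC :=
  fun x y => M (x.1, x.2.2) (y.1, y.2.2) * (if x.2.1 = y.2.1 then 1 else 0)

/-- M ⊗ I_A on the tripartite space, M acting on B ⊗ C -/
def embBC {dB dC : ℕ} (M : Bip dB dC) (dA : ℕ) : Tri dA dB dC :=
  fun x y => M (x.2.1, x.2.2) (y.2.1, y.2.2) * (if x.1 = y.1 then 1 else 0)

section AuxGadgets

open scoped Classical

variable {n : ℕ}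

/-- conjugate-linear-in-first-slot dot product -/
noncomputable def dot {ι : Type*} [Fintype ι] (v w : ι → ℂ) : ℂ := ∑ x, star (v x) * w x

lemma dot_star {ι : Type*} [Fintype ι] (v w : ι → ℂ) : star (dot v w) = dot w v := by
  simp [dot, Finset.sum_comm, mul_comm]

lemma ONB.dot_eq {e : Fin n → Fin n → ℂ} (he : ONB e) (i j : Fin n) :
    dot (e i) (e j) = if i = j then 1 else 0 := he i j

/-- matrix whose columns are the basis vectors -/
noncomputable def basU (e : Fin n → Fin n → ℂ) : Mat n := Matrix.of fun k i => e i k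

lemma basU_conjT_mul {e : Fin n → Fin n → ℂ} (he : ONB e) : (basU e)ᴴ * basU e = 1 := by
  ext i j
  simpa [Matrix.mul_apply, basU, Matrix.conjTranspose_apply, Matrix.one_apply] using he i j

lemma basU_mul_conjT {e : Fin n → Fin n → ℂ} (he : ONB e) : basU e * (basU e)ᴴ = 1 :=
  mul_eq_one_comm.mp (basU_conjT_mul he)

/-- completeness (resolution of identity), entrywise -/
lemma ONB.complete {e : Fin n → Fin n → ℂ} (he : ONB e) (x y : Fin n) :
    (∑ i, e i x * star (e i y)) = if x = y then 1 else 0 := by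
  have := congrFun (congrFun (basU_mul_conjT he) x) y
  simpa [Matrix.mul_apply, basU, Matrix.conjTranspose_apply, Matrix.one_apply] using this

lemma ONB.complete' {e : Fin n → Fin n → ℂ} (he : ONB e) (x y : Fin n) :
    (∑ i, star (e i x) * e i y) = if x = y then 1 else 0 := by
  have := congrArg star (he.complete x y)
  simpa [star_sum, mul_comm, apply_ite] using this

/-- classical operator: diagonal in the basis `e` with coefficients `d` -/
noncomputable def cOp (e : Fin n → Fin n → ℂ) (d : Fin n → ℂ) : Mat n :=
  ∑ i, d i • projV (e i)

lemma sum_mulVec' {ι κ : Type*} [Fintype ι] (s : Finset κ) (M : κ → Matrix ι ι ℂ)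
    (v : ι → ℂ) : (∑ k ∈ s, M k) *ᵥ v = ∑ k ∈ s, M k *ᵥ v := by
  funext x
  simp [Matrix.mulVec, dotProduct, Matrix.sum_apply, Finset.sum_mul]
  rw [Finset.sum_comm]

lemma mulVec_sum' {ι κ : Type*} [Fintype ι] (s : Finset κ) (M : Matrix ι ι ℂ)
    (v : κ → ι → ℂ) : M *ᵥ (∑ k ∈ s, v k) = ∑ k ∈ s, M *ᵥ v k := by
  funext x
  simp [Matrix.mulVec, dotProduct, Finset.sum_apply, Finset.mul_sum]
  rw [Finset.sum_comm]

lemma cOp_eq (e : Fin n → Fin n → ℂ) (d : Fin n → ℂ) :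
    cOp e d = basU e * Matrix.diagonal d * (basU e)ᴴ := by
  ext x y
  simp only [cOp, Matrix.sum_apply, Finset.sum_apply, Pi.smul_apply, projV, smul_eq_mul,
    Matrix.mul_apply, Matrix.diagonal_apply, Matrix.conjTranspose_apply, basU, Matrix.of_apply]
  simp only [Matrix.smul_apply, Pi.smul_apply, projV, smul_eq_mul, mul_ite, ite_mul, zero_mul,
    mul_zero, Finset.sum_ite_eq, Finset.sum_ite_eq', Finset.mem_univ, if_true]
  refine Finset.sum_congr rfl fun i _ => ?_
  ring

lemma projV_mulVec {ι : Type*} [Fintype ι] (v u : ι → ℂ) :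
    projV v *ᵥ u = dot v u • v := by
  funext x
  simp [projV, Matrix.mulVec, dotProduct, dot, Finset.mul_sum, Pi.smul_apply,
    smul_eq_mul, mul_comm, mul_left_comm]

lemma cOp_mulVec (e : Fin n → Fin n → ℂ) (d : Fin n → ℂ) (u : Fin n → ℂ) :
    cOp e d *ᵥ u = ∑ i, (d i * dot (e i) u) • e i := by
  rw [cOp, sum_mulVec']
  refine Finset.sum_congr rfl fun i _ => ?_
  rw [Matrix.smul_mulVec, projV_mulVec, smul_smul]

lemma dot_sum_smul {ι : Type*} [Fintype ι] (v : ι → ℂ) {κ : Type*} (s : Finset κ)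
    (c : κ → ℂ) (w : κ → ι → ℂ) :
    dot v (∑ k ∈ s, c k • w k) = ∑ k ∈ s, c k * dot v (w k) := by
  simp only [dot, Finset.sum_apply, Pi.smul_apply, smul_eq_mul, Finset.mul_sum]
  rw [Finset.sum_comm]
  exact Finset.sum_congr rfl fun k _ => Finset.sum_congr rfl fun x _ => by ring

lemma dot_smul_right {ι : Type*} [Fintype ι] (v w : ι → ℂ) (c : ℂ) :
    dot v (c • w) = c * dot v w := by
  simp only [dot, Pi.smul_apply, smul_eq_mul, Finset.mul_sum]
  exact Finset.sum_congr rfl fun x _ => by ring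

end AuxGadgets

section FactorSection

open scoped Classical

variable {n : ℕ}

lemma cancel_left {U W : Mat n} (h : U * W = 1) (X : Mat n) : U * (W * X) = X := by
  rw [← Matrix.mul_assoc, h, Matrix.one_mul]

lemma cancel_right {U W : Mat n} (h : U * W = 1) (X : Mat n) : X * (U * W) = X := by
  rw [h, Matrix.mul_one]

lemma conj_mul {U : Mat n} (hU1 : Uᴴ * U = 1) (A B : Mat n) :
    (U * A * Uᴴ) * (U * B * Uᴴ) = U * (A * B) * Uᴴ := by
  simp only [Matrix.mul_assoc, cancel_left hU1]

lemma conj_recover {U : Mat n} (hU2 : U * Uᴴ = 1) (M : Mat n) :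
    U * (Uᴴ * M * U) * Uᴴ = M := by
  simp only [Matrix.mul_assoc]
  rw [cancel_right hU2, cancel_left hU2]

lemma unconj_comm {U : Mat n} (hU1 : Uᴴ * U = 1) {A M : Mat n}
    (h : (U * A * Uᴴ) * M = M * (U * A * Uᴴ)) :
    A * (Uᴴ * M * U) = (Uᴴ * M * U) * A := by
  have e1 : A * (Uᴴ * M * U) = Uᴴ * ((U * A * Uᴴ) * M) * U := by
    simp only [Matrix.mul_assoc, cancel_left hU1]
  have e2 : Uᴴ * (M * (U * A * Uᴴ)) * U = (Uᴴ * M * U) * A := by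
    simp only [Matrix.mul_assoc]
    rw [cancel_right hU1]
  rw [e1, h, e2]

lemma comm_conj {U : Mat n} (hU1 : Uᴴ * U = 1) (hU2 : U * Uᴴ = 1) {A : Mat n} (M : Mat n)
    (h : A * (Uᴴ * M * U) = (Uᴴ * M * U) * A) :
    (U * A * Uᴴ) * M = M * (U * A * Uᴴ) := by
  calc (U * A * Uᴴ) * M = (U * A * Uᴴ) * (U * (Uᴴ * M * U) * Uᴴ) := by rw [conj_recover hU2]
    _ = U * (A * (Uᴴ * M * U)) * Uᴴ := conj_mul hU1 _ _
    _ = U * ((Uᴴ * M * U) * A) * Uᴴ := by rw [h]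
    _ = (U * (Uᴴ * M * U) * Uᴴ) * (U * A * Uᴴ) := (conj_mul hU1 _ _).symm
    _ = M * (U * A * Uᴴ) := by rw [conj_recover hU2]

lemma diag_comm_indicator {K : Type*} (q : Fin n → K → ℝ) (M : Mat n)
    (h : ∀ k, Matrix.diagonal (fun i => (q i k : ℂ)) * M
      = M * Matrix.diagonal (fun i => (q i k : ℂ)))
    (w : K → ℝ) :
    Matrix.diagonal (fun i => if q i = w then (1:ℂ) else 0) * M
      = M * Matrix.diagonal (fun i => if q i = w then (1:ℂ) else 0) := by
  ext i i'
  rw [Matrix.diagonal_mul, Matrix.mul_diagonal]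
  by_cases hq : q i = q i'
  · rw [hq]; ring
  · have hM : M i i' = 0 := by
      obtain ⟨k, hk⟩ := Function.ne_iff.mp hq
      have h2 : (Matrix.diagonal (fun i => (q i k : ℂ)) * M) i i'
          = (M * Matrix.diagonal (fun i => (q i k : ℂ))) i i' := by rw [h k]
      rw [Matrix.diagonal_mul, Matrix.mul_diagonal] at h2
      have h3 : ((q i k : ℂ) - (q i' k : ℂ)) * M i i' = 0 := by linear_combination h2
      rcases mul_eq_zero.mp h3 with h4 | h4
      · exact absurd (Complex.ofReal_inj.mp (sub_eq_zero.mp h4)) hk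
      · exact h4
    simp [hM]

lemma factor {J K : Type*} {e f : Fin n → Fin n → ℂ} (he : ONB e) (hf : ONB f)
    (p : Fin n → J → ℝ) (r : Fin n → K → ℝ)
    (hcomm : ∀ j k, cOp e (fun i => (p i j : ℂ)) * cOp f (fun i => (r i k : ℂ))
      = cOp f (fun i => (r i k : ℂ)) * cOp e (fun i => (p i j : ℂ))) :
    ∃ g : Fin n → Fin n → ℂ, ONB g ∧
      (∀ j m, ∃ c : ℂ, cOp e (fun i => (p i j : ℂ)) *ᵥ g m = c • g m) ∧
      (∀ k m, ∃ c : ℂ, cOp f (fun i => (r i k : ℂ)) *ᵥ g m = c • g m) := by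
  have hU1 : (basU e)ᴴ * basU e = 1 := basU_conjT_mul he
  have hU2 : basU e * (basU e)ᴴ = 1 := basU_mul_conjT he
  have hV1 : (basU f)ᴴ * basU f = 1 := basU_conjT_mul hf
  have hV2 : basU f * (basU f)ᴴ = 1 := basU_mul_conjT hf
  set U := basU e
  set V := basU f
  set X : J → Mat n := fun j => cOp e (fun i => (p i j : ℂ)) with hX
  set Y : K → Mat n := fun k => cOp f (fun i => (r i k : ℂ)) with hY
  have hXeq : ∀ j, X j = U * Matrix.diagonal (fun i => (p i j : ℂ)) * Uᴴ :=
    fun j => cOp_eq e _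
  have hYeq : ∀ k, Y k = V * Matrix.diagonal (fun i => (r i k : ℂ)) * Vᴴ :=
    fun k => cOp_eq f _
  set F : (J → ℝ) → Mat n :=
    fun v => U * Matrix.diagonal (fun i => if p i = v then (1:ℂ) else 0) * Uᴴ with hF
  set G : (K → ℝ) → Mat n :=
    fun w => V * Matrix.diagonal (fun i => if r i = w then (1:ℂ) else 0) * Vᴴ with hG
  -- F commutes with Y
  have f1 : ∀ (v : J → ℝ) k, F v * Y k = Y k * F v := by
    intro v k
    have hd : ∀ j, Matrix.diagonal (fun i => (p i j : ℂ)) * (Uᴴ * Y k * U)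
        = (Uᴴ * Y k * U) * Matrix.diagonal (fun i => (p i j : ℂ)) := by
      intro j
      refine unconj_comm hU1 ?_
      rw [← hXeq j]
      exact hcomm j k
    exact comm_conj hU1 hU2 (Y k) (diag_comm_indicator p (Uᴴ * Y k * U) hd v)
  -- F commutes with G
  have f2 : ∀ (v : J → ℝ) (w : K → ℝ), F v * G w = G w * F v := by
    intro v w
    have hd : ∀ k, Matrix.diagonal (fun i => (r i k : ℂ)) * (Vᴴ * F v * V)
        = (Vᴴ * F v * V) * Matrix.diagonal (fun i => (r i k : ℂ)) := by
      intro k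
      refine unconj_comm hV1 ?_
      rw [← hYeq k]
      exact (f1 v k).symm
    exact (comm_conj hV1 hV2 (F v) (diag_comm_indicator r (Vᴴ * F v * V) hd w)).symm
  -- products of the projectors
  have hFF : ∀ v v', F v * F v' = if v = v' then F v else 0 := by
    intro v v'
    rw [hF]
    simp only
    rw [conj_mul hU1, Matrix.diagonal_mul_diagonal]
    by_cases hv : v = v'
    · subst hv
      simp only [if_pos rfl]
      have : (fun i => (if p i = v then (1:ℂ) else 0) * (if p i = v then (1:ℂ) else 0))
          = fun i => if p i = v then (1:ℂ) else 0 := by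
        funext i
        by_cases h : p i = v <;> simp [h]
      rw [this]
      simp
    · rw [if_neg hv]
      have : (fun i => (if p i = v then (1:ℂ) else 0) * (if p i = v' then (1:ℂ) else 0))
          = fun _ => (0:ℂ) := by
        funext i
        by_cases h : p i = v
        · have : ¬ p i = v' := by rw [h]; exact hv
          simp [h, this, hv]
        · simp [h]
      rw [this, Matrix.diagonal_zero, Matrix.mul_zero, Matrix.zero_mul]
  have hGG : ∀ w w', G w * G w' = if w = w' then G w else 0 := by
    intro w w'
    rw [hG]
    simp only
    rw [conj_mul hV1, Matrix.diagonal_mul_diagonal]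
    by_cases hv : w = w'
    · subst hv
      simp only [if_pos rfl]
      have : (fun i => (if r i = w then (1:ℂ) else 0) * (if r i = w then (1:ℂ) else 0))
          = fun i => if r i = w then (1:ℂ) else 0 := by
        funext i
        by_cases h : r i = w <;> simp [h]
      rw [this]
      simp
    · rw [if_neg hv]
      have : (fun i => (if r i = w then (1:ℂ) else 0) * (if r i = w' then (1:ℂ) else 0))
          = fun _ => (0:ℂ) := by
        funext i
        by_cases h : r i = w
        · have : ¬ r i = w' := by rw [h]; exact hv
          simp [h, this, hv]
        · simp [h]
      rw [this, Matrix.diagonal_zero, Matrix.mul_zero, Matrix.zero_mul]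
  -- action of X on F and Y on G
  have hXF : ∀ j v, X j * F v = ((v j : ℝ) : ℂ) • F v := by
    intro j v
    rw [hXeq j, hF]
    simp only
    rw [conj_mul hU1, Matrix.diagonal_mul_diagonal]
    have : (fun i => (p i j : ℂ) * (if p i = v then (1:ℂ) else 0))
        = fun i => ((v j : ℝ) : ℂ) * (if p i = v then (1:ℂ) else 0) := by
      funext i
      by_cases h : p i = v
      · simp [h]
      · simp [h]
    rw [this]
    have hdsmul : Matrix.diagonal (fun i => ((v j : ℝ) : ℂ) * (if p i = v then (1:ℂ) else 0))
        = ((v j : ℝ) : ℂ) • Matrix.diagonal (fun i => if p i = v then (1:ℂ) else 0) := by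
      rw [← Matrix.diagonal_smul]
      congr 1
    rw [hdsmul, Matrix.mul_smul, Matrix.smul_mul]
  have hYG : ∀ k w, Y k * G w = ((w k : ℝ) : ℂ) • G w := by
    intro k w
    rw [hYeq k, hG]
    simp only
    rw [conj_mul hV1, Matrix.diagonal_mul_diagonal]
    have : (fun i => (r i k : ℂ) * (if r i = w then (1:ℂ) else 0))
        = fun i => ((w k : ℝ) : ℂ) * (if r i = w then (1:ℂ) else 0) := by
      funext i
      by_cases h : r i = w
      · simp [h]
      · simp [h]
    rw [this]
    have hdsmul : Matrix.diagonal (fun i => ((w k : ℝ) : ℂ) * (if r i = w then (1:ℂ) else 0))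
        = ((w k : ℝ) : ℂ) • Matrix.diagonal (fun i => if r i = w then (1:ℂ) else 0) := by
      rw [← Matrix.diagonal_smul]
      congr 1
    rw [hdsmul, Matrix.mul_smul, Matrix.smul_mul]
  -- resolutions of identity
  set S : Finset (J → ℝ) := Finset.image p Finset.univ with hS
  set T : Finset (K → ℝ) := Finset.image r Finset.univ with hT
  have hFone : ∑ v ∈ S, F v = 1 := by
    rw [hF]
    simp only
    rw [← Finset.sum_mul, ← Finset.mul_sum]
    have : (∑ v ∈ S, Matrix.diagonal fun i => if p i = v then (1:ℂ) else 0) = 1 := by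
      ext i i'
      by_cases h : i = i'
      · subst h
        simp only [Matrix.sum_apply, Matrix.diagonal_apply_eq, Matrix.one_apply_eq]
        rw [Finset.sum_ite_eq S (p i) (fun _ => (1:ℂ))]
        simp [hS, Finset.mem_image]
      · simp [Matrix.sum_apply, Matrix.diagonal_apply_ne _ h, Matrix.one_apply_ne h]
    rw [this, Matrix.mul_one, hU2]
  have hGone : ∑ w ∈ T, G w = 1 := by
    rw [hG]
    simp only
    rw [← Finset.sum_mul, ← Finset.mul_sum]
    have : (∑ w ∈ T, Matrix.diagonal fun i => if r i = w then (1:ℂ) else 0) = 1 := by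
      ext i i'
      by_cases h : i = i'
      · subst h
        simp only [Matrix.sum_apply, Matrix.diagonal_apply_eq, Matrix.one_apply_eq]
        rw [Finset.sum_ite_eq T (r i) (fun _ => (1:ℂ))]
        simp [hT, Finset.mem_image]
      · simp [Matrix.sum_apply, Matrix.diagonal_apply_ne _ h, Matrix.one_apply_ne h]
    rw [this, Matrix.mul_one, hV2]
  set L : Finset ((J → ℝ) × (K → ℝ)) := S ×ˢ T with hL
  have hPsum : ∑ x ∈ L, F x.1 * G x.2 = 1 := by
    rw [hL, Finset.sum_product]
    calc ∑ v ∈ S, ∑ w ∈ T, F v * G w = ∑ v ∈ S, F v * (∑ w ∈ T, G w) := by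
          refine Finset.sum_congr rfl fun v _ => ?_
          rw [Finset.mul_sum]
      _ = (∑ v ∈ S, F v) * (∑ w ∈ T, G w) := by rw [Finset.sum_mul]
      _ = 1 := by rw [hFone, hGone, Matrix.one_mul]
  have hPP : ∀ x y : (J → ℝ) × (K → ℝ),
      (F x.1 * G x.2) * (F y.1 * G y.2) = if x = y then F x.1 * G x.2 else 0 := by
    intro x y
    have h1 : F x.1 * G x.2 * (F y.1 * G y.2) = (F x.1 * F y.1) * (G x.2 * G y.2) := by
      calc F x.1 * G x.2 * (F y.1 * G y.2)
          = F x.1 * ((G x.2 * F y.1) * G y.2) := by simp only [Matrix.mul_assoc]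
        _ = F x.1 * ((F y.1 * G x.2) * G y.2) := by rw [← f2 y.1 x.2]
        _ = (F x.1 * F y.1) * (G x.2 * G y.2) := by simp only [Matrix.mul_assoc]
    rw [h1, hFF, hGG]
    by_cases hxy : x = y
    · subst hxy
      simp
    · rw [if_neg hxy]
      by_cases h1' : x.1 = y.1
      · have h2' : ¬ x.2 = y.2 := fun h => hxy (Prod.ext h1' h)
        simp [h2']
      · simp [h1']
  -- the encoding and the Hermitian matrix
  set enc : ((J → ℝ) × (K → ℝ)) → ℕ :=
    fun x => if h : x ∈ L then ((L.equivFin ⟨x, h⟩ : Fin L.card) : ℕ) else 0 with henc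
  have hencInj : ∀ x ∈ L, ∀ y ∈ L, enc x = enc y → x = y := by
    intro x hx y hy hxy
    rw [henc] at hxy
    simp only [dif_pos hx, dif_pos hy] at hxy
    have := L.equivFin.injective (Fin.val_injective hxy)
    exact congrArg Subtype.val this
  set H : Mat n := ∑ x ∈ L, ((enc x : ℝ) : ℂ) • (F x.1 * G x.2) with hH
  have hFherm : ∀ v, (F v)ᴴ = F v := by
    intro v
    rw [hF]
    simp only
    rw [Matrix.conjTranspose_mul, Matrix.conjTranspose_mul, Matrix.conjTranspose_conjTranspose,
      Matrix.diagonal_conjTranspose, Matrix.mul_assoc]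
    have : star (fun i => if p i = v then (1:ℂ) else 0) = fun i => if p i = v then (1:ℂ) else 0 := by
      funext i
      simp only [Pi.star_apply]
      by_cases h : p i = v <;> simp [h]
    rw [this]
  have hGherm : ∀ w, (G w)ᴴ = G w := by
    intro w
    rw [hG]
    simp only
    rw [Matrix.conjTranspose_mul, Matrix.conjTranspose_mul, Matrix.conjTranspose_conjTranspose,
      Matrix.diagonal_conjTranspose, Matrix.mul_assoc]
    have : star (fun i => if r i = w then (1:ℂ) else 0) = fun i => if r i = w then (1:ℂ) else 0 := by
      funext i
      simp only [Pi.star_apply]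
      by_cases h : r i = w <;> simp [h]
    rw [this]
  have hHherm : H.IsHermitian := by
    show Hᴴ = H
    rw [hH, Matrix.conjTranspose_sum]
    refine Finset.sum_congr rfl fun x hx => ?_
    rw [Matrix.conjTranspose_smul, Matrix.conjTranspose_mul, hFherm, hGherm, ← f2]
    congr 1
    simp [Complex.star_def, Complex.conj_ofReal]
  have hPH : ∀ x ∈ L, (F x.1 * G x.2) * H = ((enc x : ℝ) : ℂ) • (F x.1 * G x.2) := by
    intro x hx
    rw [hH, Finset.mul_sum]
    have : ∀ y ∈ L, (F x.1 * G x.2) * (((enc y : ℝ) : ℂ) • (F y.1 * G y.2))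
        = if x = y then ((enc y : ℝ) : ℂ) • (F x.1 * G x.2) else 0 := by
      intro y hy
      rw [Matrix.mul_smul, hPP x y]
      by_cases h : x = y <;> simp [h]
    rw [Finset.sum_congr rfl this, Finset.sum_ite_eq L x
      (fun y => ((enc y : ℝ) : ℂ) • (F x.1 * G x.2))]
    rw [if_pos hx]
  -- spectral theorem
  set g : Fin n → Fin n → ℂ := fun m => ⇑(hHherm.eigenvectorBasis m) with hg
  have hONBg : ONB g := by
    intro i j
    have horth := hHherm.eigenvectorBasis.orthonormal
    rw [orthonormal_iff_ite] at horth
    have := horth i j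
    simp only [PiLp.inner_apply, RCLike.inner_apply] at this
    simpa [hg, RCLike.star_def, mul_comm] using this
  have hmv : ∀ m, H *ᵥ g m = ((hHherm.eigenvalues m : ℝ) : ℂ) • g m := by
    intro m
    have := hHherm.mulVec_eigenvectorBasis m
    rw [hg]
    simp only
    rw [this]
    funext x
    simp [Complex.real_smul]
  have hvan : ∀ m, ∀ x ∈ L, ((enc x : ℝ) : ℂ) ≠ ((hHherm.eigenvalues m : ℝ) : ℂ) →
      (F x.1 * G x.2) *ᵥ g m = 0 := by
    intro m x hx hne
    have h1 : (F x.1 * G x.2) *ᵥ (H *ᵥ g m) = ((enc x : ℝ) : ℂ) • ((F x.1 * G x.2) *ᵥ g m) := by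
      rw [Matrix.mulVec_mulVec, hPH x hx, Matrix.smul_mulVec]
    have h2 : (F x.1 * G x.2) *ᵥ (H *ᵥ g m)
        = ((hHherm.eigenvalues m : ℝ) : ℂ) • ((F x.1 * G x.2) *ᵥ g m) := by
      rw [hmv m, Matrix.mulVec_smul]
    have h3 : (((enc x : ℝ) : ℂ) - ((hHherm.eigenvalues m : ℝ) : ℂ))
        • ((F x.1 * G x.2) *ᵥ g m) = 0 := by
      rw [sub_smul, ← h1, ← h2, sub_self]
    rcases smul_eq_zero.mp h3 with h4 | h4
    · exact absurd (sub_eq_zero.mp h4) hne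
    · exact h4
  have hrep : ∀ m, ∑ x ∈ L, (F x.1 * G x.2) *ᵥ g m = g m := by
    intro m
    rw [← sum_mulVec', hPsum, Matrix.one_mulVec]
  have main : ∀ (W : Mat n) (val : ((J → ℝ) × (K → ℝ)) → ℂ),
      (∀ x, W * (F x.1 * G x.2) = val x • (F x.1 * G x.2)) →
      ∀ m, ∃ c : ℂ, W *ᵥ g m = c • g m := by
    intro W val hW m
    by_cases hex : ∃ x ∈ L, ((enc x : ℝ) : ℂ) = ((hHherm.eigenvalues m : ℝ) : ℂ)
    · obtain ⟨x0, hx0L, hx0⟩ := hex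
      refine ⟨val x0, ?_⟩
      calc W *ᵥ g m = W *ᵥ (∑ x ∈ L, (F x.1 * G x.2) *ᵥ g m) := by rw [hrep m]
        _ = ∑ x ∈ L, W *ᵥ ((F x.1 * G x.2) *ᵥ g m) := by
            rw [mulVec_sum']
        _ = ∑ x ∈ L, val x0 • ((F x.1 * G x.2) *ᵥ g m) := by
            refine Finset.sum_congr rfl fun x hx => ?_
            by_cases hc : ((enc x : ℝ) : ℂ) = ((hHherm.eigenvalues m : ℝ) : ℂ)
            · have hxx0 : x = x0 := by
                refine hencInj x hx x0 hx0L ?_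
                have := hc.trans hx0.symm
                exact_mod_cast this
              rw [Matrix.mulVec_mulVec, hW x, Matrix.smul_mulVec, hxx0]
            · rw [hvan m x hx hc]
              simp
        _ = val x0 • g m := by rw [← Finset.smul_sum, hrep m]
    · push_neg at hex
      refine ⟨0, ?_⟩
      have hgz : g m = 0 := by
        rw [← hrep m]
        exact Finset.sum_eq_zero fun x hx => hvan m x hx (hex x hx)
      rw [hgz]
      simp
  refine ⟨g, hONBg, ?_, ?_⟩
  · intro j m
    refine main (X j) (fun x => ((x.1 j : ℝ) : ℂ)) ?_ m
    intro x
    rw [← Matrix.mul_assoc, hXF j x.1, Matrix.smul_mul]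
  · intro k m
    refine main (Y k) (fun x => ((x.2 k : ℝ) : ℂ)) ?_ m
    intro x
    rw [← Matrix.mul_assoc, ← f1 x.1 k, Matrix.mul_assoc, hYG k x.2, Matrix.mul_smul]

end FactorSection

section AssembleSection

lemma sum_swap4 {A B C D : Type*} [Fintype A] [Fintype B] [Fintype C] [Fintype D]
    (f : A → B → C → D → ℂ) :
    ∑ a, ∑ b, ∑ c, ∑ d, f a b c d = ∑ c, ∑ d, ∑ a, ∑ b, f a b c d := by
  have h1 : ∑ a, ∑ b, ∑ c, ∑ d, f a b c d = ∑ a, ∑ c, ∑ b, ∑ d, f a b c d :=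
    Finset.sum_congr rfl fun a _ => Finset.sum_comm
  have h2 : ∑ a, ∑ c, ∑ b, ∑ d, f a b c d = ∑ a, ∑ c, ∑ d, ∑ b, f a b c d :=
    Finset.sum_congr rfl fun a _ => Finset.sum_congr rfl fun c _ => Finset.sum_comm
  have h3 : ∑ a, ∑ c, ∑ d, ∑ b, f a b c d = ∑ c, ∑ a, ∑ d, ∑ b, f a b c d :=
    Finset.sum_comm
  have h4 : ∑ c, ∑ a, ∑ d, ∑ b, f a b c d = ∑ c, ∑ d, ∑ a, ∑ b, f a b c d :=
    Finset.sum_congr rfl fun c _ => Finset.sum_comm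
  rw [h1, h2, h3, h4]

lemma dot_prod2 {m l : ℕ} (u v : Fin m → ℂ) (w z : Fin l → ℂ) :
    dot (prod2 u w) (prod2 v z) = dot u v * dot w z := by
  rw [dot, dot, dot, Finset.sum_mul_sum, Fintype.sum_prod_type]
  refine Finset.sum_congr rfl fun x _ => Finset.sum_congr rfl fun y _ => ?_
  simp only [prod2, star_mul']
  ring

lemma dot_sum {ι κ : Type*} [Fintype ι] (v : ι → ℂ) {s : Finset κ} (w : κ → ι → ℂ) :
    dot v (∑ k ∈ s, w k) = ∑ k ∈ s, dot v (w k) := by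
  simp only [dot, Finset.sum_apply, Finset.mul_sum]
  rw [Finset.sum_comm]

lemma ONB.sum_projV {n : ℕ} {a : Fin n → Fin n → ℂ} (ha : ONB a) :
    ∑ i, projV (a i) = 1 := by
  ext x y
  simp only [Matrix.sum_apply, projV, Matrix.one_apply]
  exact ha.complete x y

lemma prod_complete {m l : ℕ} {a : Fin m → Fin m → ℂ} {b : Fin l → Fin l → ℂ}
    (ha : ONB a) (hb : ONB b) :
    ∑ s : Fin m × Fin l, projV (prod2 (a s.1) (b s.2)) = 1 := by
  ext x y
  simp only [Matrix.sum_apply, projV, Matrix.one_apply, prod2, Fintype.sum_prod_type]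
  have : ∀ i : Fin m, ∑ j : Fin l, (a i x.1 * b j x.2) * star (a i y.1 * b j y.2)
      = (a i x.1 * star (a i y.1)) * ∑ j, b j x.2 * star (b j y.2) := by
    intro i
    rw [Finset.mul_sum]
    refine Finset.sum_congr rfl fun j _ => ?_
    simp only [star_mul']
    ring
  rw [Finset.sum_congr rfl fun i _ => this i, ← Finset.sum_mul, ha.complete, hb.complete]
  by_cases h1 : x.1 = y.1
  · by_cases h2 : x.2 = y.2
    · have : x = y := Prod.ext h1 h2
      simp [h1, h2, this]
    · have : ¬ x = y := fun h => h2 (congrArg Prod.snd h)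
      simp [h1, h2, this]
  · have : ¬ x = y := fun h => h1 (congrArg Prod.fst h)
    simp [h1, this]

lemma proj_mul_proj {ι : Type*} [Fintype ι] [DecidableEq ι] (a b : ι → ℂ) (M : Matrix ι ι ℂ) :
    projV a * M * projV b
      = (∑ u, ∑ v, star (a u) * M u v * b v) • Matrix.of (fun x y => a x * star (b y)) := by
  ext x y
  simp only [Matrix.mul_apply, projV, Matrix.smul_apply, Matrix.of_apply, smul_eq_mul,
    Finset.sum_mul, Finset.mul_sum]
  rw [Finset.sum_comm]
  refine Finset.sum_congr rfl fun u _ => Finset.sum_congr rfl fun v _ => by ring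

lemma recon_basis {ι κ : Type*} [Fintype ι] [DecidableEq ι] [Fintype κ] (E : κ → ι → ℂ)
    (hone : ∑ s, projV (E s) = 1) (M : Matrix ι ι ℂ) :
    M = ∑ s, ∑ t, (∑ u, ∑ v, star (E s u) * M u v * E t v)
        • Matrix.of (fun x y => E s x * star (E t y)) := by
  conv_lhs => rw [← Matrix.one_mul M, ← hone, ← Matrix.mul_one ((∑ s, projV (E s)) * M),
    ← hone]
  rw [Finset.sum_mul, Finset.sum_mul]
  refine Finset.sum_congr rfl fun s _ => ?_
  rw [Finset.mul_sum]
  refine Finset.sum_congr rfl fun t _ => ?_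
  exact proj_mul_proj (E s) (E t) M

lemma real_smul_mat {ι : Type*} (r : ℝ) (M : Matrix ι ι ℂ) :
    r • M = ((r : ℝ) : ℂ) • M := by
  ext x y
  simp [Matrix.smul_apply, Complex.real_smul]

lemma elem_sum {ι : Type*} [Fintype ι] (u' v' : ι → ℂ) {κ1 κ2 : Type*} [Fintype κ1]
    [Fintype κ2] (p : κ1 → κ2 → ℝ) (w : κ1 → κ2 → ι → ℂ) :
    (∑ x, ∑ y, star (u' x) * ((∑ i, ∑ j, (p i j) • projV (w i j)) x y) * v' y)
      = ∑ i, ∑ j, (p i j : ℂ) * (dot u' (w i j) * dot (w i j) v') := by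
  have hentry : ∀ x y, ((∑ i, ∑ j, (p i j) • projV (w i j)) x y)
      = ∑ i, ∑ j, (p i j : ℂ) * (w i j x * star (w i j y)) := by
    intro x y
    simp [Matrix.sum_apply, projV, Complex.real_smul]
  calc (∑ x, ∑ y, star (u' x) * ((∑ i, ∑ j, (p i j) • projV (w i j)) x y) * v' y)
      = ∑ x, ∑ y, ∑ i, ∑ j, (p i j : ℂ)
          * ((star (u' x) * w i j x) * (star (w i j y) * v' y)) := by
        refine Finset.sum_congr rfl fun x _ => Finset.sum_congr rfl fun y _ => ?_
        rw [hentry x y, Finset.mul_sum, Finset.sum_mul]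
        refine Finset.sum_congr rfl fun i _ => ?_
        rw [Finset.mul_sum, Finset.sum_mul]
        refine Finset.sum_congr rfl fun j _ => ?_
        ring
    _ = ∑ i, ∑ j, ∑ x, ∑ y, (p i j : ℂ)
          * ((star (u' x) * w i j x) * (star (w i j y) * v' y)) := sum_swap4 _
    _ = ∑ i, ∑ j, (p i j : ℂ) * (dot u' (w i j) * dot (w i j) v') := by
        refine Finset.sum_congr rfl fun i _ => Finset.sum_congr rfl fun j _ => ?_
        rw [dot, dot, Finset.sum_mul_sum, Finset.mul_sum]
        refine Finset.sum_congr rfl fun x _ => ?_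
        rw [Finset.mul_sum]

lemma norm_sum_one {n : ℕ} {e : Fin n → Fin n → ℂ} {a : Fin n → Fin n → ℂ}
    (he : ONB e) (ha : ONB a) (i : Fin n) :
    ∑ m', Complex.normSq (dot (e i) (a m')) = 1 := by
  have hc : ∑ m', ((Complex.normSq (dot (e i) (a m'))) : ℂ) = 1 := by
    have h1 : ∀ m', ((Complex.normSq (dot (e i) (a m'))) : ℂ)
        = dot (a m') (e i) * dot (e i) (a m') := by
      intro m'
      rw [← Complex.mul_conj (dot (e i) (a m'))]
      rw [mul_comm]
      congr 1
      exact dot_star (e i) (a m')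
    calc ∑ m', ((Complex.normSq (dot (e i) (a m'))) : ℂ)
        = ∑ m', dot (e i) (projV (a m') *ᵥ e i) := by
          refine Finset.sum_congr rfl fun m' _ => ?_
          rw [h1 m', projV_mulVec, dot_smul_right]
      _ = dot (e i) ((∑ m', projV (a m')) *ᵥ e i) := by
          rw [sum_mulVec', dot_sum]
      _ = 1 := by rw [ha.sum_projV, Matrix.one_mulVec, he.dot_eq, if_pos rfl]
  exact_mod_cast hc

lemma assemble {dm dl : ℕ} (ρ : Bip dm dl)
    (e : Fin dm → Fin dm → ℂ) (f : Fin dl → Fin dl → ℂ) (p : Fin dm → Fin dl → ℝ)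
    (he : ONB e) (hf : ONB f) (hp : ∀ i j, 0 ≤ p i j)
    (hρ : ρ = ∑ i, ∑ j, (p i j) • projV (prod2 (e i) (f j)))
    (a : Fin dm → Fin dm → ℂ) (b : Fin dl → Fin dl → ℂ) (ha : ONB a) (hb : ONB b)
    (hXa : ∀ j m', ∃ c : ℂ, cOp e (fun i => (p i j : ℂ)) *ᵥ a m' = c • a m')
    (hUb : ∀ i n', ∃ c : ℂ, cOp f (fun j => (p i j : ℂ)) *ᵥ b n' = c • b n') :
    ∃ P : Fin dm → Fin dl → ℝ, (∀ i j, 0 ≤ P i j) ∧ (∑ i, ∑ j, P i j) = (∑ i, ∑ j, p i j)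
      ∧ ρ = ∑ i, ∑ j, (P i j) • projV (prod2 (a i) (b j)) := by
  classical
  set P : Fin dm → Fin dl → ℝ := fun m' n' => ∑ i, ∑ j,
    p i j * Complex.normSq (dot (e i) (a m')) * Complex.normSq (dot (f j) (b n')) with hPdef
  have hP0 : ∀ m' n', 0 ≤ P m' n' := by
    intro m' n'
    refine Finset.sum_nonneg fun i _ => Finset.sum_nonneg fun j _ => ?_
    exact mul_nonneg (mul_nonneg (hp i j) (Complex.normSq_nonneg _)) (Complex.normSq_nonneg _)
  have hPsum : (∑ m', ∑ n', P m' n') = (∑ i, ∑ j, p i j) := by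
    rw [hPdef]
    simp only
    calc ∑ m', ∑ n', ∑ i, ∑ j,
          p i j * Complex.normSq (dot (e i) (a m')) * Complex.normSq (dot (f j) (b n'))
        = ∑ i, ∑ j, ∑ m', ∑ n',
          p i j * Complex.normSq (dot (e i) (a m')) * Complex.normSq (dot (f j) (b n')) := by
          have := sum_swap4 (fun (m' : Fin dm) (n' : Fin dl) (i : Fin dm) (j : Fin dl) =>
            ((p i j * Complex.normSq (dot (e i) (a m'))
              * Complex.normSq (dot (f j) (b n')) : ℝ) : ℂ))
          exact_mod_cast this
      _ = ∑ i, ∑ j, p i j := by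
          refine Finset.sum_congr rfl fun i _ => Finset.sum_congr rfl fun j _ => ?_
          have : ∀ m', ∑ n',
              p i j * Complex.normSq (dot (e i) (a m')) * Complex.normSq (dot (f j) (b n'))
              = p i j * Complex.normSq (dot (e i) (a m')) := by
            intro m'
            rw [← Finset.mul_sum, norm_sum_one hf hb j, mul_one]
          rw [Finset.sum_congr rfl fun m' _ => this m', ← Finset.mul_sum,
            norm_sum_one he ha i, mul_one]
  refine ⟨P, hP0, hPsum, ?_⟩
  -- key off-diagonal computation
  set E : (Fin dm × Fin dl) → (Fin dm × Fin dl) → ℂ :=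
    fun s => prod2 (a s.1) (b s.2) with hE
  have helem : ∀ s t : Fin dm × Fin dl,
      (∑ u, ∑ v, star (E s u) * ρ u v * E t v)
        = if s = t then ((P s.1 s.2 : ℝ) : ℂ) else 0 := by
    intro s t
    have hexp : (∑ u, ∑ v, star (E s u) * ρ u v * E t v)
        = ∑ i, ∑ j, (p i j : ℂ) * ((dot (a s.1) (e i) * dot (b s.2) (f j))
            * (dot (e i) (a t.1) * dot (f j) (b t.2))) := by
      rw [hρ]
      rw [elem_sum (E s) (E t) p (fun i j => prod2 (e i) (f j))]
      refine Finset.sum_congr rfl fun i _ => Finset.sum_congr rfl fun j _ => ?_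
      rw [hE]
      simp only
      rw [dot_prod2, dot_prod2]
    by_cases hst : s = t
    · subst hst
      rw [if_pos rfl, hexp]
      have : ∀ i j, (p i j : ℂ) * ((dot (a s.1) (e i) * dot (b s.2) (f j))
            * (dot (e i) (a s.1) * dot (f j) (b s.2)))
          = ((p i j * Complex.normSq (dot (e i) (a s.1))
              * Complex.normSq (dot (f j) (b s.2)) : ℝ) : ℂ) := by
        intro i j
        have h1 : dot (a s.1) (e i) * dot (e i) (a s.1)
            = ((Complex.normSq (dot (e i) (a s.1)) : ℝ) : ℂ) := by
          rw [← dot_star (e i) (a s.1)]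
          rw [mul_comm]
          exact Complex.mul_conj (dot (e i) (a s.1))
        have h2 : dot (b s.2) (f j) * dot (f j) (b s.2)
            = ((Complex.normSq (dot (f j) (b s.2)) : ℝ) : ℂ) := by
          rw [← dot_star (f j) (b s.2)]
          rw [mul_comm]
          exact Complex.mul_conj (dot (f j) (b s.2))
        calc (p i j : ℂ) * ((dot (a s.1) (e i) * dot (b s.2) (f j))
              * (dot (e i) (a s.1) * dot (f j) (b s.2)))
            = (p i j : ℂ) * ((dot (a s.1) (e i) * dot (e i) (a s.1))
              * (dot (b s.2) (f j) * dot (f j) (b s.2))) := by ring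
          _ = _ := by rw [h1, h2]; push_cast; ring
      rw [Finset.sum_congr rfl fun i _ => Finset.sum_congr rfl fun j _ => this i j, hPdef]
      push_cast
      rfl
    · rw [if_neg hst]
      by_cases h1 : s.1 = t.1
      · have h2 : ¬ s.2 = t.2 := fun h => hst (Prod.ext h1 h)
        rw [hexp]
        have hinner : ∀ i, ∑ j, (p i j : ℂ) * ((dot (a s.1) (e i) * dot (b s.2) (f j))
              * (dot (e i) (a t.1) * dot (f j) (b t.2))) = 0 := by
          intro i
          have hz : ∑ j, (p i j : ℂ) * dot (f j) (b t.2) * dot (b s.2) (f j) = 0 := by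
            obtain ⟨c, hc⟩ := hUb i t.2
            have h5 := congrArg (dot (b s.2)) hc
            rw [cOp_mulVec, dot_sum_smul, dot_smul_right, hb.dot_eq, if_neg h2, mul_zero] at h5
            exact h5
          calc ∑ j, (p i j : ℂ) * ((dot (a s.1) (e i) * dot (b s.2) (f j))
                * (dot (e i) (a t.1) * dot (f j) (b t.2)))
              = (dot (a s.1) (e i) * dot (e i) (a t.1))
                * ∑ j, (p i j : ℂ) * dot (f j) (b t.2) * dot (b s.2) (f j) := by
                rw [Finset.mul_sum]
                refine Finset.sum_congr rfl fun j _ => ?_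
                ring
            _ = 0 := by rw [hz, mul_zero]
        rw [Finset.sum_congr rfl fun i _ => hinner i, Finset.sum_const_zero]
      · rw [hexp]
        have houter : ∀ j, ∑ i, (p i j : ℂ) * ((dot (a s.1) (e i) * dot (b s.2) (f j))
              * (dot (e i) (a t.1) * dot (f j) (b t.2))) = 0 := by
          intro j
          have hz : ∑ i, (p i j : ℂ) * dot (e i) (a t.1) * dot (a s.1) (e i) = 0 := by
            obtain ⟨c, hc⟩ := hXa j t.1
            have h5 := congrArg (dot (a s.1)) hc
            rw [cOp_mulVec, dot_sum_smul, dot_smul_right, ha.dot_eq, if_neg h1, mul_zero] at h5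
            exact h5
          calc ∑ i, (p i j : ℂ) * ((dot (a s.1) (e i) * dot (b s.2) (f j))
                * (dot (e i) (a t.1) * dot (f j) (b t.2)))
              = (dot (b s.2) (f j) * dot (f j) (b t.2))
                * ∑ i, (p i j : ℂ) * dot (e i) (a t.1) * dot (a s.1) (e i) := by
                rw [Finset.mul_sum]
                refine Finset.sum_congr rfl fun i _ => ?_
                ring
            _ = 0 := by rw [hz, mul_zero]
        rw [Finset.sum_comm, Finset.sum_congr rfl fun j _ => houter j, Finset.sum_const_zero]
  -- reconstruction
  have hone : ∑ s : Fin dm × Fin dl, projV (E s) = 1 := prod_complete ha hb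
  calc ρ = ∑ s, ∑ t, (∑ u, ∑ v, star (E s u) * ρ u v * E t v)
        • Matrix.of (fun x y => E s x * star (E t y)) := recon_basis E hone ρ
    _ = ∑ s : Fin dm × Fin dl, ((P s.1 s.2 : ℝ) : ℂ) • projV (E s) := by
        refine Finset.sum_congr rfl fun s _ => ?_
        rw [Finset.sum_congr rfl fun t (_ : t ∈ Finset.univ) => by rw [helem s t]]
        have hsplit : ∀ t : Fin dm × Fin dl,
            (if s = t then ((P s.1 s.2 : ℝ) : ℂ) else 0)
              • Matrix.of (fun x y => E s x * star (E t y))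
            = if s = t then ((P s.1 s.2 : ℝ) : ℂ)
                • Matrix.of (fun x y => E s x * star (E t y)) else 0 := by
          intro t
          by_cases h : s = t <;> simp [h]
        rw [Finset.sum_congr rfl fun t (_ : t ∈ Finset.univ) => hsplit t]
        rw [Finset.sum_ite_eq Finset.univ s
          (fun t => ((P s.1 s.2 : ℝ) : ℂ) • Matrix.of (fun x y => E s x * star (E t y)))]
        rw [if_pos (Finset.mem_univ s)]
        rfl
    _ = ∑ i, ∑ j, (P i j) • projV (prod2 (a i) (b j)) := by
        rw [Fintype.sum_prod_type]
        refine Finset.sum_congr rfl fun i _ => Finset.sum_congr rfl fun j _ => ?_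
        rw [real_smul_mat]

end AssembleSection

section CtrSection

lemma sum_swap5 {A B C D E : Type*} [Fintype A] [Fintype B] [Fintype C] [Fintype D] [Fintype E]
    (f : A → B → C → D → E → ℂ) :
    ∑ a, ∑ b, ∑ c, ∑ d, ∑ e, f a b c d e = ∑ b, ∑ c, ∑ d, ∑ e, ∑ a, f a b c d e := by
  have h1 : ∑ a, ∑ b, ∑ c, ∑ d, ∑ e, f a b c d e
      = ∑ b, ∑ a, ∑ c, ∑ d, ∑ e, f a b c d e := Finset.sum_comm
  have h2 : ∑ b, ∑ a, ∑ c, ∑ d, ∑ e, f a b c d e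
      = ∑ b, ∑ c, ∑ a, ∑ d, ∑ e, f a b c d e :=
    Finset.sum_congr rfl fun b _ => Finset.sum_comm
  have h3 : ∑ b, ∑ c, ∑ a, ∑ d, ∑ e, f a b c d e
      = ∑ b, ∑ c, ∑ d, ∑ a, ∑ e, f a b c d e :=
    Finset.sum_congr rfl fun b _ => Finset.sum_congr rfl fun c _ => Finset.sum_comm
  have h4 : ∑ b, ∑ c, ∑ d, ∑ a, ∑ e, f a b c d e
      = ∑ b, ∑ c, ∑ d, ∑ e, ∑ a, f a b c d e :=
    Finset.sum_congr rfl fun b _ => Finset.sum_congr rfl fun c _ =>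
      Finset.sum_congr rfl fun d _ => Finset.sum_comm
  rw [h1, h2, h3, h4]

lemma sum_comm4 {A B C D : Type*} [Fintype A] [Fintype B] [Fintype C] [Fintype D]
    (f : A → B → C → D → ℂ) :
    ∑ a, ∑ b, ∑ c, ∑ d, f a b c d = ∑ b, ∑ a, ∑ d, ∑ c, f a b c d := by
  have h1 : ∑ a, ∑ b, ∑ c, ∑ d, f a b c d = ∑ b, ∑ a, ∑ c, ∑ d, f a b c d :=
    Finset.sum_comm
  have h2 : ∑ b, ∑ a, ∑ c, ∑ d, f a b c d = ∑ b, ∑ a, ∑ d, ∑ c, f a b c d :=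
    Finset.sum_congr rfl fun b _ => Finset.sum_congr rfl fun a _ => Finset.sum_comm
  rw [h1, h2]

/-- contraction of the right factor against a vector -/
noncomputable def ctrR {dm dl : ℕ} (ρ : Bip dm dl) (w : Fin dl → ℂ) : Mat dm :=
  fun α β => ∑ x, ∑ y, star (w x) * ρ (α, x) (β, y) * w y

/-- contraction of the left factor against a vector -/
noncomputable def ctrL {dm dl : ℕ} (ρ : Bip dm dl) (v : Fin dm → ℂ) : Mat dl :=
  fun α β => ∑ x, ∑ y, star (v x) * ρ (x, α) (y, β) * v y

lemma ctrR_class {dm dl : ℕ} {e : Fin dm → Fin dm → ℂ} {f : Fin dl → Fin dl → ℂ}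
    (hf : ONB f) (p : Fin dm → Fin dl → ℝ) (j0 : Fin dl) :
    ctrR (∑ i, ∑ j, (p i j) • projV (prod2 (e i) (f j))) (f j0)
      = cOp e (fun i => (p i j0 : ℂ)) := by
  funext α β
  have hentry : ∀ x y, ((∑ i, ∑ j, (p i j) • projV (prod2 (e i) (f j))) (α,x) (β,y))
      = ∑ i, ∑ j, (p i j : ℂ) * ((e i α * f j x) * star (e i β * f j y)) := by
    intro x y
    simp [Matrix.sum_apply, projV, prod2, Complex.real_smul]
  calc ctrR (∑ i, ∑ j, (p i j) • projV (prod2 (e i) (f j))) (f j0) α β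
      = ∑ x, ∑ y, star (f j0 x)
          * ((∑ i, ∑ j, (p i j) • projV (prod2 (e i) (f j))) (α,x) (β,y)) * f j0 y := rfl
    _ = ∑ x, ∑ y, ∑ i, ∑ j, (p i j : ℂ) * ((e i α * star (e i β))
          * ((star (f j0 x) * f j x) * (star (f j y) * f j0 y))) := by
        refine Finset.sum_congr rfl fun x _ => Finset.sum_congr rfl fun y _ => ?_
        rw [hentry x y, Finset.mul_sum, Finset.sum_mul]
        refine Finset.sum_congr rfl fun i _ => ?_
        rw [Finset.mul_sum, Finset.sum_mul]
        refine Finset.sum_congr rfl fun j _ => ?_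
        simp only [star_mul']
        ring
    _ = ∑ i, ∑ j, ∑ x, ∑ y, (p i j : ℂ) * ((e i α * star (e i β))
          * ((star (f j0 x) * f j x) * (star (f j y) * f j0 y))) := sum_swap4 _
    _ = ∑ i, ∑ j, (p i j : ℂ) * ((e i α * star (e i β))
          * (dot (f j0) (f j) * dot (f j) (f j0))) := by
        refine Finset.sum_congr rfl fun i _ => Finset.sum_congr rfl fun j _ => ?_
        simp only [dot, Finset.mul_sum, Finset.sum_mul]
        rw [Finset.sum_comm]
    _ = cOp e (fun i => (p i j0 : ℂ)) α β := by
        have hcol : ∀ i, ∑ j, (p i j : ℂ) * ((e i α * star (e i β))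
            * (dot (f j0) (f j) * dot (f j) (f j0)))
            = (p i j0 : ℂ) * (e i α * star (e i β)) := by
          intro i
          calc ∑ j, (p i j : ℂ) * ((e i α * star (e i β))
                * (dot (f j0) (f j) * dot (f j) (f j0)))
              = ∑ j, if j = j0 then (p i j : ℂ) * (e i α * star (e i β)) else 0 := by
                refine Finset.sum_congr rfl fun j _ => ?_
                rw [hf.dot_eq, hf.dot_eq]
                by_cases h : j = j0
                · subst h
                  simp
                · have h' : ¬ j0 = j := fun hh => h hh.symm
                  simp [h, h']
            _ = (p i j0 : ℂ) * (e i α * star (e i β)) := by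
                rw [Finset.sum_ite_eq' Finset.univ j0
                  (fun j => (p i j : ℂ) * (e i α * star (e i β)))]
                simp
        rw [Finset.sum_congr rfl fun i _ => hcol i]
        simp only [cOp, Matrix.sum_apply, Matrix.smul_apply, projV, smul_eq_mul]
    
lemma ctrL_class {dm dl : ℕ} {e : Fin dm → Fin dm → ℂ} {f : Fin dl → Fin dl → ℂ}
    (he : ONB e) (p : Fin dm → Fin dl → ℝ) (i0 : Fin dm) :
    ctrL (∑ i, ∑ j, (p i j) • projV (prod2 (e i) (f j))) (e i0)
      = cOp f (fun j => (p i0 j : ℂ)) := by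
  funext α β
  have hentry : ∀ x y, ((∑ i, ∑ j, (p i j) • projV (prod2 (e i) (f j))) (x,α) (y,β))
      = ∑ i, ∑ j, (p i j : ℂ) * ((e i x * f j α) * star (e i y * f j β)) := by
    intro x y
    simp [Matrix.sum_apply, projV, prod2, Complex.real_smul]
  calc ctrL (∑ i, ∑ j, (p i j) • projV (prod2 (e i) (f j))) (e i0) α β
      = ∑ x, ∑ y, star (e i0 x)
          * ((∑ i, ∑ j, (p i j) • projV (prod2 (e i) (f j))) (x,α) (y,β)) * e i0 y := rfl
    _ = ∑ x, ∑ y, ∑ i, ∑ j, (p i j : ℂ) * ((f j α * star (f j β))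
          * ((star (e i0 x) * e i x) * (star (e i y) * e i0 y))) := by
        refine Finset.sum_congr rfl fun x _ => Finset.sum_congr rfl fun y _ => ?_
        rw [hentry x y, Finset.mul_sum, Finset.sum_mul]
        refine Finset.sum_congr rfl fun i _ => ?_
        rw [Finset.mul_sum, Finset.sum_mul]
        refine Finset.sum_congr rfl fun j _ => ?_
        simp only [star_mul']
        ring
    _ = ∑ i, ∑ j, ∑ x, ∑ y, (p i j : ℂ) * ((f j α * star (f j β))
          * ((star (e i0 x) * e i x) * (star (e i y) * e i0 y))) := sum_swap4 _
    _ = ∑ i, ∑ j, (p i j : ℂ) * ((f j α * star (f j β))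
          * (dot (e i0) (e i) * dot (e i) (e i0))) := by
        refine Finset.sum_congr rfl fun i _ => Finset.sum_congr rfl fun j _ => ?_
        simp only [dot, Finset.mul_sum, Finset.sum_mul]
        rw [Finset.sum_comm]
    _ = cOp f (fun j => (p i0 j : ℂ)) α β := by
        have hcol : ∀ i, (∑ j, (p i j : ℂ) * ((f j α * star (f j β))
            * (dot (e i0) (e i) * dot (e i) (e i0))))
            = if i = i0 then ∑ j, (p i j : ℂ) * (f j α * star (f j β)) else 0 := by
          intro i
          rw [he.dot_eq, he.dot_eq]
          by_cases h : i = i0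
          · subst h
            simp
          · have h' : ¬ i0 = i := fun hh => h hh.symm
            simp [h, h']
        rw [Finset.sum_congr rfl fun i _ => hcol i]
        rw [Finset.sum_ite_eq' Finset.univ i0
          (fun i => ∑ j, (p i j : ℂ) * (f j α * star (f j β)))]
        simp only [Finset.mem_univ, if_pos]
        simp only [cOp, Matrix.sum_apply, Matrix.smul_apply, projV, smul_eq_mul]

lemma ctr_mul_expand {n : ℕ} {B C : Type*} [Fintype B] [Fintype C]
    (M1 M2 : Mat n) (f : Fin n → B → Fin n → B → ℂ) (g' : Fin n → C → Fin n → C → ℂ)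
    (w : B → ℂ) (u : C → ℂ)
    (hM1 : ∀ α β, M1 α β = ∑ x, ∑ y, star (w x) * f α x β y * w y)
    (hM2 : ∀ α β, M2 α β = ∑ x, ∑ y, star (u x) * g' α x β y * u y)
    (α β : Fin n) :
    (M1 * M2) α β = ∑ x2, ∑ x3, ∑ y2, ∑ y3, (star (w x2) * w y2) * ((star (u x3) * u y3)
      * (∑ z, f α x2 z y2 * g' z x3 β y3)) := by
  rw [Matrix.mul_apply]
  calc ∑ z, M1 α z * M2 z β
      = ∑ z, ∑ x2, ∑ x3, ∑ y2, ∑ y3,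
          (star (w x2) * f α x2 z y2 * w y2) * (star (u x3) * g' z x3 β y3 * u y3) := by
        refine Finset.sum_congr rfl fun z _ => ?_
        rw [hM1, hM2, Finset.sum_mul_sum]
        refine Finset.sum_congr rfl fun x2 _ => Finset.sum_congr rfl fun x3 _ => ?_
        rw [Finset.sum_mul_sum]
    _ = ∑ x2, ∑ x3, ∑ y2, ∑ y3, ∑ z,
          (star (w x2) * f α x2 z y2 * w y2) * (star (u x3) * g' z x3 β y3 * u y3) :=
        sum_swap5 _
    _ = ∑ x2, ∑ x3, ∑ y2, ∑ y3, (star (w x2) * w y2) * ((star (u x3) * u y3)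
          * (∑ z, f α x2 z y2 * g' z x3 β y3)) := by
        refine Finset.sum_congr rfl fun x2 _ => Finset.sum_congr rfl fun x3 _ =>
          Finset.sum_congr rfl fun y2 _ => Finset.sum_congr rfl fun y3 _ => ?_
        rw [Finset.mul_sum, Finset.mul_sum]
        refine Finset.sum_congr rfl fun z _ => ?_
        ring

lemma ctr_comm1 {dA dB dC : ℕ} (ρAB : Bip dA dB) (ρAC : Bip dA dC)
    (h1 : embAB ρAB dC * embAC ρAC dB = embAC ρAC dB * embAB ρAB dC)
    (w : Fin dB → ℂ) (u : Fin dC → ℂ) :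
    ctrR ρAB w * ctrR ρAC u = ctrR ρAC u * ctrR ρAB w := by
  have key : ∀ (x1 y1 : Fin dA) (x2 y2 : Fin dB) (x3 y3 : Fin dC),
      (∑ z, ρAB (x1,x2) (z,y2) * ρAC (z,x3) (y1,y3))
        = ∑ z, ρAC (x1,x3) (z,y3) * ρAB (z,x2) (y1,y2) := by
    intro x1 y1 x2 y2 x3 y3
    have h := Matrix.ext_iff.mpr h1 (x1,x2,x3) (y1,y2,y3)
    simpa [Matrix.mul_apply, embAB, embAC, Fintype.sum_prod_type, mul_ite, ite_mul,
      mul_zero, zero_mul, mul_one, one_mul, Finset.sum_ite_eq, Finset.sum_ite_eq',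
      Finset.mem_univ] using h
  ext α β
  rw [ctr_mul_expand (ctrR ρAB w) (ctrR ρAC u) (fun a x b y => ρAB (a,x) (b,y))
      (fun a x b y => ρAC (a,x) (b,y)) w u (fun _ _ => rfl) (fun _ _ => rfl) α β,
    ctr_mul_expand (ctrR ρAC u) (ctrR ρAB w) (fun a x b y => ρAC (a,x) (b,y))
      (fun a x b y => ρAB (a,x) (b,y)) u w (fun _ _ => rfl) (fun _ _ => rfl) α β]
  rw [sum_comm4 (fun (x3 : Fin dC) (x2 : Fin dB) (y3 : Fin dC) (y2 : Fin dB) =>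
    (star (u x3) * u y3) * ((star (w x2) * w y2)
      * (∑ z, ρAC (α,x3) (z,y3) * ρAB (z,x2) (β,y2))))]
  refine Finset.sum_congr rfl fun x2 _ => Finset.sum_congr rfl fun x3 _ =>
    Finset.sum_congr rfl fun y2 _ => Finset.sum_congr rfl fun y3 _ => ?_
  rw [key α β x2 y2 x3 y3]
  ring

lemma ctr_comm2 {dA dB dC : ℕ} (ρAB : Bip dA dB) (ρBC : Bip dB dC)
    (h2 : embAB ρAB dC * embBC ρBC dA = embBC ρBC dA * embAB ρAB dC)
    (v : Fin dA → ℂ) (u : Fin dC → ℂ) :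
    ctrL ρAB v * ctrR ρBC u = ctrR ρBC u * ctrL ρAB v := by
  have key : ∀ (x1 y1 : Fin dA) (x2 y2 : Fin dB) (x3 y3 : Fin dC),
      (∑ z, ρAB (x1,x2) (y1,z) * ρBC (z,x3) (y2,y3))
        = ∑ z, ρBC (x2,x3) (z,y3) * ρAB (x1,z) (y1,y2) := by
    intro x1 y1 x2 y2 x3 y3
    have h := Matrix.ext_iff.mpr h2 (x1,x2,x3) (y1,y2,y3)
    simpa [Matrix.mul_apply, embAB, embBC, Fintype.sum_prod_type, mul_ite, ite_mul,
      mul_zero, zero_mul, mul_one, one_mul, Finset.sum_ite_eq, Finset.sum_ite_eq',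
      Finset.mem_univ] using h
  ext α β
  rw [ctr_mul_expand (ctrL ρAB v) (ctrR ρBC u) (fun a x b y => ρAB (x,a) (y,b))
      (fun a x b y => ρBC (a,x) (b,y)) v u (fun _ _ => rfl) (fun _ _ => rfl) α β,
    ctr_mul_expand (ctrR ρBC u) (ctrL ρAB v) (fun a x b y => ρBC (a,x) (b,y))
      (fun a x b y => ρAB (x,a) (y,b)) u v (fun _ _ => rfl) (fun _ _ => rfl) α β]
  rw [sum_comm4 (fun (x3 : Fin dC) (x2 : Fin dA) (y3 : Fin dC) (y2 : Fin dA) =>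
    (star (u x3) * u y3) * ((star (v x2) * v y2)
      * (∑ z, ρBC (α,x3) (z,y3) * ρAB (x2,z) (y2,β))))]
  refine Finset.sum_congr rfl fun x2 _ => Finset.sum_congr rfl fun x3 _ =>
    Finset.sum_congr rfl fun y2 _ => Finset.sum_congr rfl fun y3 _ => ?_
  rw [key x2 y2 α β x3 y3]
  ring

lemma ctr_comm3 {dA dB dC : ℕ} (ρAC : Bip dA dC) (ρBC : Bip dB dC)
    (h3 : embAC ρAC dB * embBC ρBC dA = embBC ρBC dA * embAC ρAC dB)
    (v : Fin dA → ℂ) (w : Fin dB → ℂ) :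
    ctrL ρAC v * ctrL ρBC w = ctrL ρBC w * ctrL ρAC v := by
  have key : ∀ (x1 y1 : Fin dA) (x2 y2 : Fin dB) (x3 y3 : Fin dC),
      (∑ z, ρAC (x1,x3) (y1,z) * ρBC (x2,z) (y2,y3))
        = ∑ z, ρBC (x2,x3) (y2,z) * ρAC (x1,z) (y1,y3) := by
    intro x1 y1 x2 y2 x3 y3
    have h := Matrix.ext_iff.mpr h3 (x1,x2,x3) (y1,y2,y3)
    simpa [Matrix.mul_apply, embAC, embBC, Fintype.sum_prod_type, mul_ite, ite_mul,
      mul_zero, zero_mul, mul_one, one_mul, Finset.sum_ite_eq, Finset.sum_ite_eq',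
      Finset.mem_univ] using h
  ext α β
  rw [ctr_mul_expand (ctrL ρAC v) (ctrL ρBC w) (fun a x b y => ρAC (x,a) (y,b))
      (fun a x b y => ρBC (x,a) (y,b)) v w (fun _ _ => rfl) (fun _ _ => rfl) α β,
    ctr_mul_expand (ctrL ρBC w) (ctrL ρAC v) (fun a x b y => ρBC (x,a) (y,b))
      (fun a x b y => ρAC (x,a) (y,b)) w v (fun _ _ => rfl) (fun _ _ => rfl) α β]
  rw [sum_comm4 (fun (x3 : Fin dB) (x2 : Fin dA) (y3 : Fin dB) (y2 : Fin dA) =>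
    (star (w x3) * w y3) * ((star (v x2) * v y2)
      * (∑ z, ρBC (x3,α) (y3,z) * ρAC (x2,z) (y2,β))))]
  refine Finset.sum_congr rfl fun x2 _ => Finset.sum_congr rfl fun x3 _ =>
    Finset.sum_congr rfl fun y2 _ => Finset.sum_congr rfl fun y3 _ => ?_
  rw [key x2 y2 x3 y3 α β]
  ring

lemma trace_classical {dm dl : ℕ} {e : Fin dm → Fin dm → ℂ} {f : Fin dl → Fin dl → ℂ}
    (he : ONB e) (hf : ONB f) (p : Fin dm → Fin dl → ℝ) (ρ : Bip dm dl)
    (hρ : ρ = ∑ i, ∑ j, (p i j) • projV (prod2 (e i) (f j))) (htr : ρ.trace = 1) :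
    (∑ i, ∑ j, p i j) = 1 := by
  have hPtr : ∀ (i : Fin dm) (j : Fin dl), (projV (prod2 (e i) (f j))).trace = 1 := by
    intro i j
    have : (projV (prod2 (e i) (f j))).trace
        = ∑ x : Fin dm × Fin dl, prod2 (e i) (f j) x * star (prod2 (e i) (f j) x) := rfl
    rw [this]
    calc ∑ x : Fin dm × Fin dl, prod2 (e i) (f j) x * star (prod2 (e i) (f j) x)
        = (∑ x1, star (e i x1) * e i x1) * (∑ x2, star (f j x2) * f j x2) := by
          rw [Finset.sum_mul_sum, Fintype.sum_prod_type]
          refine Finset.sum_congr rfl fun x1 _ => Finset.sum_congr rfl fun x2 _ => ?_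
          simp only [prod2, star_mul']
          ring
      _ = 1 := by rw [he i i, hf j j]; simp
  have h1 : ρ.trace = ((∑ i, ∑ j, p i j : ℝ) : ℂ) := by
    rw [hρ, Matrix.trace_sum]
    push_cast
    refine Finset.sum_congr rfl fun i _ => ?_
    rw [Matrix.trace_sum]
    refine Finset.sum_congr rfl fun j _ => ?_
    rw [Matrix.trace_smul, hPtr i j]
    simp [Complex.real_smul]
  rw [h1] at htr
  exact_mod_cast htr

end CtrSection


/-- vanishing commutators imply a common product eigenbasis for the
three fully classical bipartite states. -/
theorem stmt_2 {dA dB dC : ℕ}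
    (ρAB : Bip dA dB) (ρAC : Bip dA dC) (ρBC : Bip dB dC)
    (hdAB : IsDensity ρAB) (hdAC : IsDensity ρAC) (hdBC : IsDensity ρBC)
    (hfcAB : FullyClassical ρAB) (hfcAC : FullyClassical ρAC)
    (hfcBC : FullyClassical ρBC)
    (hmA : trR ρAB = trR ρAC) (hmB : trL ρAB = trR ρBC)
    (hmC : trL ρAC = trL ρBC)
    (h1 : embAB ρAB dC * embAC ρAC dB = embAC ρAC dB * embAB ρAB dC)
    (h2 : embAB ρAB dC * embBC ρBC dA = embBC ρBC dA * embAB ρAB dC)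
    (h3 : embAC ρAC dB * embBC ρBC dA = embBC ρBC dA * embAC ρAC dB) :
    ∃ (a : Fin dA → Fin dA → ℂ) (b : Fin dB → Fin dB → ℂ) (c : Fin dC → Fin dC → ℂ)
      (p : Fin dA → Fin dB → ℝ) (q : Fin dB → Fin dC → ℝ) (r : Fin dA → Fin dC → ℝ),
      ONB a ∧ ONB b ∧ ONB c ∧
      (∀ i j, 0 ≤ p i j) ∧ (∀ j k, 0 ≤ q j k) ∧ (∀ i k, 0 ≤ r i k) ∧
      (∑ i, ∑ j, p i j) = 1 ∧ (∑ j, ∑ k, q j k) = 1 ∧ (∑ i, ∑ k, r i k) = 1 ∧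
      ρAB = ∑ i, ∑ j, (p i j) • projV (prod2 (a i) (b j)) ∧
      ρBC = ∑ j, ∑ k, (q j k) • projV (prod2 (b j) (c k)) ∧
      ρAC = ∑ i, ∑ k, (r i k) • projV (prod2 (a i) (c k)) := by
  classical
  obtain ⟨aAB, bAB, p0, haAB, hbAB, hp0, hρAB⟩ := hfcAB
  obtain ⟨aAC, cAC, r0, haAC, hcAC, hr0, hρAC⟩ := hfcAC
  obtain ⟨bBC, cBC, q0, hbBC, hcBC, hq0, hρBC⟩ := hfcBC
  -- identify single-system classical operators with contractions
  have hXA : ∀ j, cOp aAB (fun i => (p0 i j : ℂ)) = ctrR ρAB (bAB j) := by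
    intro j; rw [hρAB]; exact (ctrR_class hbAB p0 j).symm
  have hUB : ∀ i, cOp bAB (fun j => (p0 i j : ℂ)) = ctrL ρAB (aAB i) := by
    intro i; rw [hρAB]; exact (ctrL_class haAB p0 i).symm
  have hYA : ∀ k, cOp aAC (fun i => (r0 i k : ℂ)) = ctrR ρAC (cAC k) := by
    intro k; rw [hρAC]; exact (ctrR_class hcAC r0 k).symm
  have hWC : ∀ i, cOp cAC (fun k => (r0 i k : ℂ)) = ctrL ρAC (aAC i) := by
    intro i; rw [hρAC]; exact (ctrL_class haAC r0 i).symm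
  have hVB : ∀ k, cOp bBC (fun j => (q0 j k : ℂ)) = ctrR ρBC (cBC k) := by
    intro k; rw [hρBC]; exact (ctrR_class hcBC q0 k).symm
  have hZC : ∀ j, cOp cBC (fun k => (q0 j k : ℂ)) = ctrL ρBC (bBC j) := by
    intro j; rw [hρBC]; exact (ctrL_class hbBC q0 j).symm
  -- commutation of the single-system operators
  have cA : ∀ (j : Fin dB) (k : Fin dC),
      cOp aAB (fun i => (p0 i j : ℂ)) * cOp aAC (fun i => (r0 i k : ℂ))
        = cOp aAC (fun i => (r0 i k : ℂ)) * cOp aAB (fun i => (p0 i j : ℂ)) := by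
    intro j k
    rw [hXA j, hYA k]
    exact ctr_comm1 ρAB ρAC h1 (bAB j) (cAC k)
  have cB : ∀ (i : Fin dA) (k : Fin dC),
      cOp bAB (fun j => (p0 i j : ℂ)) * cOp bBC (fun j => (q0 j k : ℂ))
        = cOp bBC (fun j => (q0 j k : ℂ)) * cOp bAB (fun j => (p0 i j : ℂ)) := by
    intro i k
    rw [hUB i, hVB k]
    exact ctr_comm2 ρAB ρBC h2 (aAB i) (cBC k)
  have cC : ∀ (i : Fin dA) (j : Fin dB),
      cOp cAC (fun k => (r0 i k : ℂ)) * cOp cBC (fun k => (q0 j k : ℂ))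
        = cOp cBC (fun k => (q0 j k : ℂ)) * cOp cAC (fun k => (r0 i k : ℂ)) := by
    intro i j
    rw [hWC i, hZC j]
    exact ctr_comm3 ρAC ρBC h3 (aAC i) (bBC j)
  -- joint eigenbases on each factor
  obtain ⟨a, hONBa, haP, haR⟩ := factor haAB haAC p0 r0 cA
  obtain ⟨b, hONBb, hbP, hbQ⟩ :=
    factor hbAB hbBC (fun jb ja => p0 ja jb) q0 (fun ja kc => cB ja kc)
  obtain ⟨c, hONBc, hcR, hcQ⟩ :=
    factor hcAC hcBC (fun kc ia => r0 ia kc) (fun kc jb => q0 jb kc)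
      (fun ia jb => cC ia jb)
  -- re-expand each state in the new bases
  obtain ⟨P, hP0, hPsum, hρAB'⟩ :=
    assemble ρAB aAB bAB p0 haAB hbAB hp0 hρAB a b hONBa hONBb haP (fun i n' => hbP i n')
  obtain ⟨Q, hQ0, hQsum, hρBC'⟩ :=
    assemble ρBC bBC cBC q0 hbBC hcBC hq0 hρBC b c hONBb hONBc hbQ (fun j n' => hcQ j n')
  obtain ⟨R, hR0, hRsum, hρAC'⟩ :=
    assemble ρAC aAC cAC r0 haAC hcAC hr0 hρAC a c hONBa hONBc haR (fun i n' => hcR i n')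
  have hTp : (∑ i, ∑ j, p0 i j) = 1 := trace_classical haAB hbAB p0 ρAB hρAB hdAB.2
  have hTq : (∑ j, ∑ k, q0 j k) = 1 := trace_classical hbBC hcBC q0 ρBC hρBC hdBC.2
  have hTr : (∑ i, ∑ k, r0 i k) = 1 := trace_classical haAC hcAC r0 ρAC hρAC hdAC.2
  exact ⟨a, b, c, P, Q, R, hONBa, hONBb, hONBc, hP0, hQ0, hR0,
    hPsum.trans hTp, hQsum.trans hTq, hRsum.trans hTr, hρAB', hρBC', hρAC'⟩
end QMarginal
end

section
/- Let ρ_AB, ρ_AC, ρ_BC be fully classical bipartite states with consistent single-party marginals. If some commutator among [ρ_AB ⊗ I_C, ρ_AC ⊗ I_B], [ρ_AB ⊗ I_C, ρ_BC ⊗ I_A], [ρ_AC ⊗ I_B, ρ_BC ⊗ I_A] is nonzero, then there exists no fully classical tripartite density matrix σ_ABC = Σ_{ijk} f_{ijk}|a_i b_j c_k⟩⟨a_i b_j c_k| (for orthonormal bases {|a_i⟩},{|b_j⟩},{|c_k⟩}) whose three bipartite reductions equal ρ_AB, ρ_AC, ρ_BC. -/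
open Matrix BigOperators
open scoped Kronecker ComplexOrder

namespace QMarginal

section Aux

lemma onb_diag {n : ℕ} {a : Fin n → Fin n → ℂ} (ha : ONB a) (k : Fin n) :
    (∑ m, a k m * star (a k m)) = 1 := by
  have h := ha k k
  simp only [if_true, if_pos] at h
  rw [← h]
  exact Finset.sum_congr rfl fun m _ => mul_comm _ _

lemma onb_col {n : ℕ} {a : Fin n → Fin n → ℂ} (ha : ONB a) (m m' : Fin n) :
    (∑ i, a i m * star (a i m')) = if m = m' then 1 else 0 := by
  classical
  let M : Matrix (Fin n) (Fin n) ℂ := Matrix.of a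
  have h1 : M * Mᴴ = 1 := by
    ext i j
    have h := ha j i
    rw [Matrix.mul_apply]
    simp only [Matrix.conjTranspose_apply, Matrix.one_apply, M, Matrix.of_apply]
    rw [show (∑ k, a i k * star (a j k)) = ∑ k, star (a j k) * a i k from
      Finset.sum_congr rfl fun k _ => mul_comm _ _, h]
    by_cases hij : i = j <;> simp [hij, eq_comm]
  have h2 : Mᴴ * M = 1 := mul_eq_one_comm.mp h1
  have h3 := congrFun (congrFun h2 m') m
  rw [Matrix.mul_apply] at h3
  simp only [Matrix.conjTranspose_apply, Matrix.one_apply, M, Matrix.of_apply] at h3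
  rw [show (∑ i, a i m * star (a i m')) = ∑ i, star (a i m') * a i m from
    Finset.sum_congr rfl fun i _ => mul_comm _ _, h3]
  by_cases h : m = m' <;> simp [h, eq_comm]

lemma projV_mul {ι : Type*} [Fintype ι] (v w : ι → ℂ) (i j : ι) :
    (projV v * projV w) i j = (∑ m, star (v m) * w m) * (v i * star (w j)) := by
  rw [Matrix.mul_apply, Finset.sum_mul]
  exact Finset.sum_congr rfl fun m _ => by simp [projV]; ring

lemma ortho_proj_mul {ι κ : Type*} [Fintype κ] [DecidableEq ι] (e : ι → κ → ℂ)
    (he : ∀ s t, (∑ m, star (e s m) * e t m) = if s = t then (1:ℂ) else 0) (s t : ι) :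
    projV (e s) * projV (e t) = if s = t then projV (e s) else 0 := by
  ext i j
  rw [projV_mul, he]
  by_cases h : s = t
  · subst h; simp [projV]
  · simp [h]

lemma sum_proj_comm {ι κ ι' κ' : Type*} [Fintype ι'] [Fintype κ'] [Fintype κ] [DecidableEq ι]
    (e : ι → κ → ℂ)
    (he : ∀ s t, (∑ m, star (e s m) * e t m) = if s = t then (1:ℂ) else 0)
    (φ : ι' → ι) (ψ : κ' → ι) (r : ι' → ℝ) (q : κ' → ℝ) :
    (∑ s, r s • projV (e (φ s))) * (∑ t, q t • projV (e (ψ t))) =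
    (∑ t, q t • projV (e (ψ t))) * (∑ s, r s • projV (e (φ s))) := by
  simp only [Finset.sum_mul, Finset.mul_sum, smul_mul_assoc, mul_smul_comm,
    ortho_proj_mul e he, Finset.smul_sum]
  rw [Finset.sum_comm]
  refine Finset.sum_congr rfl fun s _ => Finset.sum_congr rfl fun t _ => ?_
  rw [smul_comm]
  by_cases h : φ s = ψ t
  · rw [if_pos h, if_pos h.symm, h]
  · rw [if_neg h, if_neg (Ne.symm h)]

lemma trC_proj {dA dB dC : ℕ} (u : Fin dA → ℂ) (v : Fin dB → ℂ) (w : Fin dC → ℂ) :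
    trC (projV (prod3 u v w)) = (∑ m, w m * star (w m)) • projV (prod2 u v) := by
  ext x y
  simp only [trC, projV, prod3, prod2, Matrix.smul_apply, smul_eq_mul]
  rw [Finset.sum_mul]
  exact Finset.sum_congr rfl fun m _ => by simp only [star_mul']; ring

lemma trB_proj {dA dB dC : ℕ} (u : Fin dA → ℂ) (v : Fin dB → ℂ) (w : Fin dC → ℂ) :
    trB (projV (prod3 u v w)) = (∑ m, v m * star (v m)) • projV (prod2 u w) := by
  ext x y
  simp only [trB, projV, prod3, prod2, Matrix.smul_apply, smul_eq_mul]
  rw [Finset.sum_mul]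
  exact Finset.sum_congr rfl fun m _ => by simp only [star_mul']; ring

lemma trA_proj {dA dB dC : ℕ} (u : Fin dA → ℂ) (v : Fin dB → ℂ) (w : Fin dC → ℂ) :
    trA (projV (prod3 u v w)) = (∑ m, u m * star (u m)) • projV (prod2 v w) := by
  ext x y
  simp only [trA, projV, prod3, prod2, Matrix.smul_apply, smul_eq_mul]
  rw [Finset.sum_mul]
  exact Finset.sum_congr rfl fun m _ => by simp only [star_mul']; ring

lemma trC_sum {dA dB dC : ℕ} {ι' : Type*} [Fintype ι'] (r : ι' → ℝ) (M : ι' → Tri dA dB dC) :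
    trC (∑ s, r s • M s) = ∑ s, r s • trC (M s) := by
  ext x y
  simp only [trC, Matrix.sum_apply, Matrix.smul_apply]
  rw [Finset.sum_comm]
  exact Finset.sum_congr rfl fun s _ => (Finset.smul_sum).symm

lemma trB_sum {dA dB dC : ℕ} {ι' : Type*} [Fintype ι'] (r : ι' → ℝ) (M : ι' → Tri dA dB dC) :
    trB (∑ s, r s • M s) = ∑ s, r s • trB (M s) := by
  ext x y
  simp only [trB, Matrix.sum_apply, Matrix.smul_apply]
  rw [Finset.sum_comm]
  exact Finset.sum_congr rfl fun s _ => (Finset.smul_sum).symm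

lemma trA_sum {dA dB dC : ℕ} {ι' : Type*} [Fintype ι'] (r : ι' → ℝ) (M : ι' → Tri dA dB dC) :
    trA (∑ s, r s • M s) = ∑ s, r s • trA (M s) := by
  ext x y
  simp only [trA, Matrix.sum_apply, Matrix.smul_apply]
  rw [Finset.sum_comm]
  exact Finset.sum_congr rfl fun s _ => (Finset.smul_sum).symm

lemma embAB_sum {dA dB dC : ℕ} {ι' : Type*} [Fintype ι'] (r : ι' → ℝ) (M : ι' → Bip dA dB) :
    embAB (∑ s, r s • M s) dC = ∑ s, r s • embAB (M s) dC := by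
  ext x y
  simp only [embAB, Matrix.sum_apply, Matrix.smul_apply, Finset.sum_mul, smul_mul_assoc]

lemma embAC_sum {dA dB dC : ℕ} {ι' : Type*} [Fintype ι'] (r : ι' → ℝ) (M : ι' → Bip dA dC) :
    embAC (∑ s, r s • M s) dB = ∑ s, r s • embAC (M s) dB := by
  ext x y
  simp only [embAC, Matrix.sum_apply, Matrix.smul_apply, Finset.sum_mul, smul_mul_assoc]

lemma embBC_sum {dA dB dC : ℕ} {ι' : Type*} [Fintype ι'] (r : ι' → ℝ) (M : ι' → Bip dB dC) :
    embBC (∑ s, r s • M s) dA = ∑ s, r s • embBC (M s) dA := by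
  ext x y
  simp only [embBC, Matrix.sum_apply, Matrix.smul_apply, Finset.sum_mul, smul_mul_assoc]

lemma embAB_proj {dA dB dC : ℕ} (u : Fin dA → ℂ) (v : Fin dB → ℂ)
    {c : Fin dC → Fin dC → ℂ} (hc : ONB c) :
    embAB (projV (prod2 u v)) dC = ∑ k, projV (prod3 u v (c k)) := by
  ext x y
  have h := onb_col hc x.2.2 y.2.2
  simp only [embAB, projV, prod2, prod3, Matrix.sum_apply]
  rw [← h, Finset.mul_sum]
  exact Finset.sum_congr rfl fun k _ => by simp only [star_mul']; ring

lemma embAC_proj {dA dB dC : ℕ} (u : Fin dA → ℂ) (w : Fin dC → ℂ)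
    {b : Fin dB → Fin dB → ℂ} (hb : ONB b) :
    embAC (projV (prod2 u w)) dB = ∑ j, projV (prod3 u (b j) w) := by
  ext x y
  have h := onb_col hb x.2.1 y.2.1
  simp only [embAC, projV, prod2, prod3, Matrix.sum_apply]
  rw [← h, Finset.mul_sum]
  exact Finset.sum_congr rfl fun j _ => by simp only [star_mul']; ring

lemma embBC_proj {dA dB dC : ℕ} (v : Fin dB → ℂ) (w : Fin dC → ℂ)
    {a : Fin dA → Fin dA → ℂ} (ha : ONB a) :
    embBC (projV (prod2 v w)) dA = ∑ i, projV (prod3 (a i) v w) := by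
  ext x y
  have h := onb_col ha x.1 y.1
  simp only [embBC, projV, prod2, prod3, Matrix.sum_apply]
  rw [← h, Finset.mul_sum]
  exact Finset.sum_congr rfl fun i _ => by simp only [star_mul']; ring

end Aux

set_option maxHeartbeats 1000000 in
/-- a nonvanishing commutator excludes compatibility with any fully
classical tripartite state. -/
theorem stmt_4 {dA dB dC : ℕ}
    (ρAB : Bip dA dB) (ρAC : Bip dA dC) (ρBC : Bip dB dC)
    (hdAB : IsDensity ρAB) (hdAC : IsDensity ρAC) (hdBC : IsDensity ρBC)
    (hfcAB : FullyClassical ρAB) (hfcAC : FullyClassical ρAC)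
    (hfcBC : FullyClassical ρBC)
    (hmA : trR ρAB = trR ρAC) (hmB : trL ρAB = trR ρBC)
    (hmC : trL ρAC = trL ρBC)
    (hcomm : embAB ρAB dC * embAC ρAC dB ≠ embAC ρAC dB * embAB ρAB dC ∨
             embAB ρAB dC * embBC ρBC dA ≠ embBC ρBC dA * embAB ρAB dC ∨
             embAC ρAC dB * embBC ρBC dA ≠ embBC ρBC dA * embAC ρAC dB) :
    ¬ ∃ σ : Tri dA dB dC, IsDensity σ ∧ FullyClassicalTri σ ∧
      trC σ = ρAB ∧ trB σ = ρAC ∧ trA σ = ρBC := by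
  rintro ⟨σ, -, ⟨a, b, c, f, ha, hb, hc, -, hσ⟩, hCσ, hBσ, hAσ⟩
  -- flattened form of σ
  have hσ' : σ = ∑ s : Fin dA × Fin dB × Fin dC,
      f s.1 s.2.1 s.2.2 • projV (prod3 (a s.1) (b s.2.1) (c s.2.2)) := by
    rw [hσ]
    simp [Fintype.sum_prod_type]
  -- orthonormality of the product family
  have he : ∀ s t : Fin dA × Fin dB × Fin dC,
      (∑ m, star (prod3 (a s.1) (b s.2.1) (c s.2.2) m) *
        prod3 (a t.1) (b t.2.1) (c t.2.2) m) = if s = t then (1:ℂ) else 0 := by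
    rintro ⟨s1, s2, s3⟩ ⟨t1, t2, t3⟩
    simp only [Fintype.sum_prod_type, prod3]
    have step : (∑ m1 : Fin dA, ∑ m2 : Fin dB, ∑ m3 : Fin dC,
        star (a s1 m1 * b s2 m2 * c s3 m3) * (a t1 m1 * b t2 m2 * c t3 m3))
        = (∑ m1, star (a s1 m1) * a t1 m1) * ((∑ m2, star (b s2 m2) * b t2 m2) *
          (∑ m3, star (c s3 m3) * c t3 m3)) := by
      rw [Finset.sum_mul_sum, Finset.sum_mul_sum]
      refine Finset.sum_congr rfl fun m1 _ => Finset.sum_congr rfl fun m2 _ => ?_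
      rw [Finset.mul_sum]
      refine Finset.sum_congr rfl fun m3 _ => ?_
      simp only [star_mul']
      ring
    rw [step, ha, hb, hc]
    by_cases h1 : s1 = t1 <;> by_cases h2 : s2 = t2 <;> by_cases h3 : s3 = t3 <;>
      simp [h1, h2, h3, Prod.ext_iff]
  -- diagonal decompositions of the three embeddings
  have hAB : embAB ρAB dC = ∑ p : (Fin dA × Fin dB × Fin dC) × Fin dC,
      f p.1.1 p.1.2.1 p.1.2.2 • projV (prod3 (a p.1.1) (b p.1.2.1) (c p.2)) := by
    rw [← hCσ, hσ', trC_sum]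
    have h1 : ∀ s : Fin dA × Fin dB × Fin dC,
        trC (projV (prod3 (a s.1) (b s.2.1) (c s.2.2))) = projV (prod2 (a s.1) (b s.2.1)) := by
      intro s; rw [trC_proj, onb_diag hc, one_smul]
    simp only [h1]
    rw [embAB_sum]
    have h2 : ∀ s : Fin dA × Fin dB × Fin dC,
        embAB (projV (prod2 (a s.1) (b s.2.1))) dC
          = ∑ k, projV (prod3 (a s.1) (b s.2.1) (c k)) := fun s => embAB_proj _ _ hc
    simp only [h2, Finset.smul_sum]
    exact (Fintype.sum_prod_type (fun p : (Fin dA × Fin dB × Fin dC) × Fin dC =>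
      f p.1.1 p.1.2.1 p.1.2.2 • projV (prod3 (a p.1.1) (b p.1.2.1) (c p.2)))).symm
  have hAC : embAC ρAC dB = ∑ p : (Fin dA × Fin dB × Fin dC) × Fin dB,
      f p.1.1 p.1.2.1 p.1.2.2 • projV (prod3 (a p.1.1) (b p.2) (c p.1.2.2)) := by
    rw [← hBσ, hσ', trB_sum]
    have h1 : ∀ s : Fin dA × Fin dB × Fin dC,
        trB (projV (prod3 (a s.1) (b s.2.1) (c s.2.2))) = projV (prod2 (a s.1) (c s.2.2)) := by
      intro s; rw [trB_proj, onb_diag hb, one_smul]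
    simp only [h1]
    rw [embAC_sum]
    have h2 : ∀ s : Fin dA × Fin dB × Fin dC,
        embAC (projV (prod2 (a s.1) (c s.2.2))) dB
          = ∑ j, projV (prod3 (a s.1) (b j) (c s.2.2)) := fun s => embAC_proj _ _ hb
    simp only [h2, Finset.smul_sum]
    exact (Fintype.sum_prod_type (fun p : (Fin dA × Fin dB × Fin dC) × Fin dB =>
      f p.1.1 p.1.2.1 p.1.2.2 • projV (prod3 (a p.1.1) (b p.2) (c p.1.2.2)))).symm
  have hBC : embBC ρBC dA = ∑ p : (Fin dA × Fin dB × Fin dC) × Fin dA,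
      f p.1.1 p.1.2.1 p.1.2.2 • projV (prod3 (a p.2) (b p.1.2.1) (c p.1.2.2)) := by
    rw [← hAσ, hσ', trA_sum]
    have h1 : ∀ s : Fin dA × Fin dB × Fin dC,
        trA (projV (prod3 (a s.1) (b s.2.1) (c s.2.2))) = projV (prod2 (b s.2.1) (c s.2.2)) := by
      intro s; rw [trA_proj, onb_diag ha, one_smul]
    simp only [h1]
    rw [embBC_sum]
    have h2 : ∀ s : Fin dA × Fin dB × Fin dC,
        embBC (projV (prod2 (b s.2.1) (c s.2.2))) dA
          = ∑ i, projV (prod3 (a i) (b s.2.1) (c s.2.2)) := fun s => embBC_proj _ _ ha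
    simp only [h2, Finset.smul_sum]
    exact (Fintype.sum_prod_type (fun p : (Fin dA × Fin dB × Fin dC) × Fin dA =>
      f p.1.1 p.1.2.1 p.1.2.2 • projV (prod3 (a p.2) (b p.1.2.1) (c p.1.2.2)))).symm
  set E : (Fin dA × Fin dB × Fin dC) → (Fin dA × Fin dB × Fin dC) → ℂ :=
    fun t => prod3 (a t.1) (b t.2.1) (c t.2.2) with hE
  rcases hcomm with h | h | h
  · apply h
    rw [hAB, hAC]
    exact sum_proj_comm (ι := Fin dA × Fin dB × Fin dC) (κ := Fin dA × Fin dB × Fin dC)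
      (ι' := (Fin dA × Fin dB × Fin dC) × Fin dC) (κ' := (Fin dA × Fin dB × Fin dC) × Fin dB)
      E he
      (fun p => (p.1.1, p.1.2.1, p.2)) (fun p => (p.1.1, p.2, p.1.2.2))
      (fun p => f p.1.1 p.1.2.1 p.1.2.2) (fun p => f p.1.1 p.1.2.1 p.1.2.2)
  · apply h
    rw [hAB, hBC]
    exact sum_proj_comm (ι := Fin dA × Fin dB × Fin dC) (κ := Fin dA × Fin dB × Fin dC)
      (ι' := (Fin dA × Fin dB × Fin dC) × Fin dC) (κ' := (Fin dA × Fin dB × Fin dC) × Fin dA)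
      E he
      (fun p => (p.1.1, p.1.2.1, p.2)) (fun p => (p.2, p.1.2.1, p.1.2.2))
      (fun p => f p.1.1 p.1.2.1 p.1.2.2) (fun p => f p.1.1 p.1.2.1 p.1.2.2)
  · apply h
    rw [hAC, hBC]
    exact sum_proj_comm (ι := Fin dA × Fin dB × Fin dC) (κ := Fin dA × Fin dB × Fin dC)
      (ι' := (Fin dA × Fin dB × Fin dC) × Fin dB) (κ' := (Fin dA × Fin dB × Fin dC) × Fin dA)
      E he
      (fun p => (p.1.1, p.2, p.1.2.2)) (fun p => (p.2, p.1.2.1, p.1.2.2))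
      (fun p => f p.1.1 p.1.2.1 p.1.2.2) (fun p => f p.1.1 p.1.2.1 p.1.2.2)
end QMarginal
end

section
/- Consider the three-qubit operator ρ_ABC(q) = (1/8)(I⊗I⊗I + q·I⊗σ_1⊗σ_1 + q·σ_2⊗I⊗σ_2 + q·σ_3⊗σ_3⊗I). Then ρ_ABC(q) is positive semidefinite if and only if |q| ≤ 1/√3. -/
open Matrix BigOperators
open scoped Kronecker ComplexOrder

namespace QMarginal

/-- the Pauli matrices -/
noncomputable def pauli : Fin 3 → Mat 2 :=
  ![!![0, 1; 1, 0], !![0, -Complex.I; Complex.I, 0], !![1, 0; 0, -1]]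
/-- the three-qubit family ρ_ABC(q) of Example 1 -/
noncomputable def rhoQ (q : ℝ) : Tri 2 2 2 :=
  (1/8 : ℝ) • ((1 : Tri 2 2 2)
    + q • ((1 : Mat 2) ⊗ₖ (pauli 0 ⊗ₖ pauli 0))
    + q • (pauli 1 ⊗ₖ ((1 : Mat 2) ⊗ₖ pauli 1))
    + q • (pauli 2 ⊗ₖ (pauli 2 ⊗ₖ (1 : Mat 2))))
noncomputable def Pm : Tri 2 2 2 :=
  ((1 : Mat 2) ⊗ₖ (pauli 0 ⊗ₖ pauli 0)) + (pauli 1 ⊗ₖ ((1 : Mat 2) ⊗ₖ pauli 1))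
    + (pauli 2 ⊗ₖ (pauli 2 ⊗ₖ (1 : Mat 2)))

set_option maxHeartbeats 2000000 in
lemma hPsq : Pm * Pm = (3:ℂ) • 1 := by
  ext ⟨a,b,c⟩ ⟨a',b',c'⟩
  fin_cases a <;> fin_cases b <;> fin_cases c <;> fin_cases a' <;> fin_cases b' <;> fin_cases c' <;>
  · simp only [Matrix.mul_apply, Fintype.sum_prod_type, Fin.sum_univ_two, Pm, pauli,
      Matrix.add_apply, Matrix.kroneckerMap_apply, Matrix.one_apply, Matrix.smul_apply,
      Matrix.cons_val', Matrix.cons_val_zero, Matrix.cons_val_one, Matrix.cons_val_two, Matrix.tail_cons, Matrix.head_cons,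
      Matrix.empty_val', Matrix.cons_val_fin_one, Matrix.head_fin_const]
    norm_num [Complex.ext_iff, Prod.ext_iff]

set_option maxHeartbeats 1000000 in
lemma hPH : Pmᴴ = Pm := by
  ext ⟨a,b,c⟩ ⟨a',b',c'⟩
  fin_cases a <;> fin_cases b <;> fin_cases c <;> fin_cases a' <;> fin_cases b' <;> fin_cases c' <;>
  · simp only [Matrix.conjTranspose_apply, Pm, pauli,
      Matrix.add_apply, Matrix.kroneckerMap_apply, Matrix.one_apply,
      Matrix.cons_val', Matrix.cons_val_zero, Matrix.cons_val_one, Matrix.cons_val_two, Matrix.tail_cons, Matrix.head_cons,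
      Matrix.empty_val', Matrix.cons_val_fin_one, Matrix.head_fin_const]
    norm_num [Complex.ext_iff, Prod.ext_iff]

noncomputable def vv (t : ℝ) : Fin 2 × Fin 2 × Fin 2 → ℂ :=
  fun x => if x = (0,0,0) then (t:ℂ) else if x = (0,1,1) then 1 else if x = (1,0,1) then -1 else 0

set_option maxHeartbeats 2000000 in
lemma ip (q t : ℝ) :
    star (vv t) ⬝ᵥ (rhoQ q) *ᵥ (vv t) = ((((t^2+2) + q*(t^2+4*t-2))/8 : ℝ) : ℂ) := by
  simp only [dotProduct, Matrix.mulVec, dotProduct, Fintype.sum_prod_type,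
    Fin.sum_univ_two, rhoQ, pauli, vv, Pi.star_apply,
    Matrix.add_apply, Matrix.kroneckerMap_apply, Matrix.one_apply, Matrix.smul_apply,
    Matrix.cons_val', Matrix.cons_val_zero, Matrix.cons_val_one, Matrix.cons_val_two, Matrix.tail_cons, Matrix.head_cons,
    Matrix.empty_val', Matrix.cons_val_fin_one, Matrix.head_fin_const, Prod.mk.injEq]
  norm_num [Complex.ext_iff]
  simp only [← Complex.ofReal_pow, Complex.ofReal_re, Complex.ofReal_im]
  constructor <;> ring

lemma rho_decomp (q : ℝ) (c : ℝ) :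
    rhoQ q = ((1-c)/8 : ℝ) • (1 : Tri 2 2 2) + (1/8 : ℝ) • ((c:ℂ) • 1 + (q:ℂ) • Pm) := by
  ext x y
  simp only [rhoQ, Pm, Matrix.smul_apply, Matrix.add_apply, smul_eq_mul, Complex.real_smul,
    Complex.ofReal_div, Complex.ofReal_sub, Complex.ofReal_one, Complex.ofReal_ofNat]
  ring

lemma psd_real_smul {a : ℝ} (ha : 0 ≤ a) {M : Tri 2 2 2} (hM : M.PosSemidef) :
    (a • M).PosSemidef := by
  refine Matrix.PosSemidef.of_dotProduct_mulVec_nonneg ?_ (fun x => ?_)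
  · unfold Matrix.IsHermitian
    rw [Matrix.conjTranspose_smul, hM.1.eq, star_trivial]
  · rw [Matrix.smul_mulVec, dotProduct_smul]
    exact smul_nonneg ha (hM.dotProduct_mulVec_nonneg x)

lemma M_psd {q : ℝ} (hq : q ≠ 0) : ((((Real.sqrt 3 * |q|) : ℝ) : ℂ) • 1 + (q:ℂ) • Pm).PosSemidef := by
  set c : ℝ := Real.sqrt 3 * |q| with hc
  have hcpos : 0 < c := by positivity
  have hc2 : (c:ℂ)^2 = 3 * (q:ℂ)^2 := by
    have h : c^2 = 3*q^2 := by
      rw [hc, mul_pow, Real.sq_sqrt (by norm_num : (0:ℝ) ≤ 3), sq_abs]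
    calc (c:ℂ)^2 = ((c^2 : ℝ):ℂ) := by push_cast; ring
    _ = ((3*q^2 : ℝ):ℂ) := by rw [h]
    _ = 3*(q:ℂ)^2 := by push_cast; ring
  set M : Tri 2 2 2 := ((c:ℝ):ℂ) • 1 + (q:ℂ) • Pm with hM
  have hMH : Mᴴ = M := by
    rw [hM, Matrix.conjTranspose_add, Matrix.conjTranspose_smul, Matrix.conjTranspose_smul,
      Matrix.conjTranspose_one, hPH, Complex.star_def, Complex.conj_ofReal, Complex.conj_ofReal]
  have hMsq : M * M = ((2*c : ℝ) : ℂ) • M := by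
    have e1 : M * M = ((c:ℂ)^2 + 3*(q:ℂ)^2) • (1:Tri 2 2 2) + (2*(c:ℂ)*(q:ℂ)) • Pm := by
      simp only [hM, add_mul, mul_add, Matrix.smul_mul, Matrix.mul_smul, Matrix.one_mul,
        Matrix.mul_one, hPsq]
      module
    rw [e1, hM]
    push_cast
    match_scalars
    · linear_combination -hc2
    · ring
  set α : ℂ := (((Real.sqrt (2*c))⁻¹ : ℝ) : ℂ) with hα
  have key : (α • M)ᴴ * (α • M) = M := by
    rw [Matrix.conjTranspose_smul, hMH, Matrix.smul_mul, Matrix.mul_smul, hMsq,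
      smul_smul, smul_smul]
    have hr : ((Real.sqrt (2*c))⁻¹) * ((Real.sqrt (2*c))⁻¹) * (2*c) = 1 := by
      have hne : Real.sqrt (2*c) ≠ 0 := by positivity
      field_simp
      rw [Real.sq_sqrt (by positivity)]
    have : star α * α * ((2*c:ℝ):ℂ) = 1 := by
      rw [hα, Complex.star_def, Complex.conj_ofReal, ← Complex.ofReal_mul, ← Complex.ofReal_mul,
        hr, Complex.ofReal_one]
    rw [this, one_smul]
  rw [← key]
  exact Matrix.posSemidef_conjTranspose_mul_self _

/-- ρ_ABC(q) is positive semidefinite iff |q| ≤ 1/√3. -/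
theorem stmt_11 (q : ℝ) :
    (rhoQ q).PosSemidef ↔ |q| ≤ 1 / Real.sqrt 3 := by
  have hs3 : (0:ℝ) < Real.sqrt 3 := Real.sqrt_pos.mpr (by norm_num)
  have hs3sq : Real.sqrt 3 ^ 2 = 3 := Real.sq_sqrt (by norm_num)
  rw [le_div_iff₀ hs3]
  constructor
  · intro h
    have h1 := h.dotProduct_mulVec_nonneg (vv (Real.sqrt 3 + 1))
    have h2 := h.dotProduct_mulVec_nonneg (vv (1 - Real.sqrt 3))
    rw [ip] at h1 h2
    rw [Complex.zero_le_real] at h1 h2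
    rcases abs_cases q with ⟨he, _⟩ | ⟨he, _⟩ <;> rw [he] <;> nlinarith [h1, h2, hs3sq, hs3]
  · intro h
    rcases eq_or_ne q 0 with rfl | hq
    · rw [rho_decomp 0 0]
      refine Matrix.PosSemidef.add (psd_real_smul (by norm_num) Matrix.PosSemidef.one)
        (psd_real_smul (by norm_num) ?_)
      simpa using (Matrix.PosSemidef.zero (n := Fin 2 × Fin 2 × Fin 2) (R := ℂ))
    · rw [rho_decomp q (Real.sqrt 3 * |q|)]
      refine Matrix.PosSemidef.add (psd_real_smul ?_ Matrix.PosSemidef.one)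
        (psd_real_smul (by norm_num) (M_psd hq))
      have : Real.sqrt 3 * |q| ≤ 1 := by nlinarith [abs_nonneg q]
      linarith
end QMarginal
end

section
/- The range of the three-qubit state ω_ABC = (1/8)(I⊗I⊗I + (1/√3)(I⊗σ_1⊗σ_1 + σ_2⊗I⊗σ_2 + σ_3⊗σ_3⊗I)) contains no product vector |α⟩⊗|β⟩⊗|γ⟩ with |α⟩,|β⟩,|γ⟩ ∈ C^2 nonzero; consequently ω_ABC is not fully separable. -/
open Matrix BigOperators
open scoped Kronecker ComplexOrder

namespace QMarginal

section Aux

open Complex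

/-- the sum of the three Pauli-correlation Kronecker terms -/
noncomputable def Sig : Tri 2 2 2 :=
  (1 : Mat 2) ⊗ₖ (pauli 0 ⊗ₖ pauli 0) + pauli 1 ⊗ₖ ((1:Mat 2) ⊗ₖ pauli 1)
    + pauli 2 ⊗ₖ (pauli 2 ⊗ₖ (1 : Mat 2))

set_option maxHeartbeats 2000000 in
lemma Sig_sq : Sig * Sig = (3:ℝ) • (1 : Tri 2 2 2) := by
  ext ⟨i,j,k⟩ ⟨i',j',k'⟩
  fin_cases i <;> fin_cases j <;> fin_cases k <;> fin_cases i' <;> fin_cases j' <;> fin_cases k' <;>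
  · simp [Sig, Matrix.mul_apply, Fintype.sum_prod_type, Fin.sum_univ_two, pauli,
      Matrix.kroneckerMap_apply, Matrix.one_apply, Prod.ext_iff]
    <;> norm_num

noncomputable def nn (u : Fin 2 → ℂ) : ℝ := normSq (u 0) + normSq (u 1)
noncomputable def xx (u : Fin 2 → ℂ) : ℝ := 2 * ((starRingEnd ℂ (u 0) * u 1).re)
noncomputable def yy (u : Fin 2 → ℂ) : ℝ := 2 * ((starRingEnd ℂ (u 0) * u 1).im)
noncomputable def zz (u : Fin 2 → ℂ) : ℝ := normSq (u 0) - normSq (u 1)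
noncomputable def Tv (u v w : Fin 2 → ℂ) : ℝ :=
  nn u * (xx v * xx w) + yy u * (nn v * yy w) + zz u * (zz v * nn w)

lemma cast_nn (u : Fin 2 → ℂ) :
    ((nn u : ℝ) : ℂ) = starRingEnd ℂ (u 0) * u 0 + starRingEnd ℂ (u 1) * u 1 := by
  apply Complex.ext <;> simp [nn, Complex.normSq_apply] <;> ring
lemma cast_xx (u : Fin 2 → ℂ) :
    ((xx u : ℝ) : ℂ) = starRingEnd ℂ (u 0) * u 1 + starRingEnd ℂ (u 1) * u 0 := by
  apply Complex.ext <;> simp [xx] <;> ring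
lemma cast_yy (u : Fin 2 → ℂ) :
    ((yy u : ℝ) : ℂ)
      = Complex.I * (starRingEnd ℂ (u 1) * u 0 - starRingEnd ℂ (u 0) * u 1) := by
  apply Complex.ext <;> simp [yy] <;> ring
lemma cast_zz (u : Fin 2 → ℂ) :
    ((zz u : ℝ) : ℂ) = starRingEnd ℂ (u 0) * u 0 - starRingEnd ℂ (u 1) * u 1 := by
  apply Complex.ext <;> simp [zz, Complex.normSq_apply] <;> ring

lemma quad_one (u v w : Fin 2 → ℂ) :
    star (prod3 u v w) ⬝ᵥ (prod3 u v w) = ((nn u * nn v * nn w : ℝ) : ℂ) := by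
  push_cast
  rw [cast_nn, cast_nn, cast_nn]
  simp only [dotProduct, prod3, Fintype.sum_prod_type, Fin.sum_univ_two, Pi.star_apply,
    RCLike.star_def, _root_.map_mul]
  ring

lemma quad_Sig (u v w : Fin 2 → ℂ) :
    star (prod3 u v w) ⬝ᵥ Sig.mulVec (prod3 u v w) = ((Tv u v w : ℝ) : ℂ) := by
  rw [Tv]; push_cast
  rw [cast_nn, cast_nn, cast_nn, cast_xx, cast_xx, cast_yy, cast_yy, cast_zz, cast_zz]
  simp only [dotProduct, Sig, Matrix.mulVec, prod3, Fintype.sum_prod_type, Fin.sum_univ_two,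
    _root_.map_mul, pauli, Matrix.kroneckerMap_apply, Matrix.one_apply, Pi.star_apply,
    RCLike.star_def, Matrix.add_apply, Matrix.cons_val', Matrix.cons_val_zero, Matrix.cons_val_one,
    Matrix.head_cons, Matrix.empty_val', Matrix.cons_val_fin_one, Matrix.head_fin_const,
    Prod.mk.injEq, if_true, Matrix.cons_val_zero]
  norm_num
  ring_nf
  simp [Complex.I_sq]
  ring_nf

lemma sphere (u : Fin 2 → ℂ) : xx u ^ 2 + yy u ^ 2 + zz u ^ 2 = nn u ^ 2 := by
  simp only [xx, yy, zz, nn, Complex.normSq_apply, Complex.mul_re, Complex.mul_im,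
    Complex.conj_re, Complex.conj_im]
  ring

lemma nn_nonneg (u : Fin 2 → ℂ) : 0 ≤ nn u := by
  have := Complex.normSq_nonneg (u 0); have := Complex.normSq_nonneg (u 1); simp [nn]; linarith

lemma nn_pos (u : Fin 2 → ℂ) (hu : u ≠ 0) : 0 < nn u := by
  rcases (nn_nonneg u).lt_or_eq with h | h
  · exact h
  · exfalso; apply hu; funext i
    have h0 := Complex.normSq_nonneg (u 0); have h1 := Complex.normSq_nonneg (u 1)
    have e0 : normSq (u 0) = 0 := by simp [nn] at h; linarith
    have e1 : normSq (u 1) = 0 := by simp [nn] at h; linarith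
    fin_cases i
    · simpa using Complex.normSq_eq_zero.mp e0
    · simpa using Complex.normSq_eq_zero.mp e1

lemma nn_zero (u : Fin 2 → ℂ) (h : nn u = 0) : u = 0 := by
  by_contra hu; exact absurd h (ne_of_gt (nn_pos u hu))

lemma Tv_le (u v w : Fin 2 → ℂ) :
    2 * (nn u * nn v * nn w) * Tv u v w ≤ 3 * (nn u * nn v * nn w) ^ 2 := by
  have g1 : nn u^2 * nn w^2 * (xx v^2 + yy v^2 + zz v^2) = nn u^2 * nn w^2 * nn v^2 := by
    rw [sphere v]
  have g2 : nn u^2 * nn v^2 * (xx w^2 + yy w^2 + zz w^2) = nn u^2 * nn v^2 * nn w^2 := by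
    rw [sphere w]
  have g3 : nn v^2 * nn w^2 * (xx u^2 + yy u^2 + zz u^2) = nn v^2 * nn w^2 * nn u^2 := by
    rw [sphere u]
  rw [Tv]
  nlinarith [sq_nonneg (nn u * nn w * xx v - nn u * nn v * xx w),
    sq_nonneg (nn v * nn w * yy u - nn u * nn v * yy w),
    sq_nonneg (nn v * nn w * zz u - nn u * nn w * zz v),
    sq_nonneg (nn u * nn w * yy v), sq_nonneg (nn u * nn v * zz w),
    sq_nonneg (nn v * nn w * xx u)]

lemma sqrt3_gt : (3:ℝ)/2 < Real.sqrt 3 := by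
  nlinarith [Real.sq_sqrt (by norm_num : (0:ℝ) ≤ 3), Real.sqrt_nonneg 3]

lemma Tv_lt (u v w : Fin 2 → ℂ) (h : 0 < nn u * nn v * nn w) :
    Tv u v w < Real.sqrt 3 * (nn u * nn v * nn w) := by
  have h1 := Tv_le u v w
  have h2 : Tv u v w ≤ 3/2 * (nn u * nn v * nn w) := by nlinarith
  nlinarith [sqrt3_gt]

lemma Tv_le' (u v w : Fin 2 → ℂ) : Tv u v w ≤ Real.sqrt 3 * (nn u * nn v * nn w) := by
  rcases eq_or_lt_of_le (nn_nonneg u) with h | h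
  · have := nn_zero u h.symm
    simp [Tv, this, nn, xx, yy, zz, ← h]
  rcases eq_or_lt_of_le (nn_nonneg v) with h' | h'
  · have := nn_zero v h'.symm
    simp [Tv, this, nn, xx, yy, zz, ← h']
  rcases eq_or_lt_of_le (nn_nonneg w) with h'' | h''
  · have := nn_zero w h''.symm
    simp [Tv, this, nn, xx, yy, zz, ← h'']
  exact le_of_lt (Tv_lt u v w (by positivity))

lemma rho_eq (q : ℝ) : rhoQ q = (1/8 : ℝ) • ((1 : Tri 2 2 2) + q • Sig) := by
  rw [rhoQ, Sig]; module

lemma hM : ((1 : Tri 2 2 2) - (1 / Real.sqrt 3) • Sig) * rhoQ (1 / Real.sqrt 3) = 0 := by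
  set q : ℝ := 1 / Real.sqrt 3 with hq
  rw [rho_eq]
  rw [Matrix.mul_smul]
  simp only [sub_mul, mul_add, one_mul, mul_one, Matrix.smul_mul, Matrix.mul_smul, Sig_sq,
    smul_smul]
  have h3 : q * (q * 3) = 1 := by
    have hne : Real.sqrt 3 ≠ 0 := by positivity
    have h : Real.sqrt 3 * Real.sqrt 3 = 3 := Real.mul_self_sqrt (by norm_num)
    rw [hq]; field_simp
    try linarith
  rw [h3]; module

lemma quadM (x y z : Fin 2 → ℂ) :
    star (prod3 x y z) ⬝ᵥ (((1 : Tri 2 2 2) - (1/Real.sqrt 3) • Sig).mulVec (prod3 x y z))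
      = ((nn x * nn y * nn z - (1/Real.sqrt 3) * Tv x y z : ℝ) : ℂ) := by
  rw [Matrix.sub_mulVec, dotProduct_sub, Matrix.one_mulVec, quad_one,
    Matrix.smul_mulVec, dotProduct_smul, quad_Sig]
  rw [Complex.real_smul]
  push_cast
  ring

lemma trace_mul_projV {ι : Type*} [Fintype ι] [DecidableEq ι] (M : Matrix ι ι ℂ) (v : ι → ℂ) :
    (M * projV v).trace = star v ⬝ᵥ M.mulVec v := by
  simp only [Matrix.trace, Matrix.diag, Matrix.mul_apply, projV, Matrix.mulVec, dotProduct,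
    Pi.star_apply, Finset.mul_sum, RCLike.star_def]
  refine Finset.sum_congr rfl fun x _ => Finset.sum_congr rfl fun y _ => by ring

lemma rho_ne : rhoQ (1 / Real.sqrt 3) ≠ 0 := by
  intro h
  have := congrFun (congrFun h ((0,0,0) : Fin 2 × Fin 2 × Fin 2)) ((0,0,0) : Fin 2 × Fin 2 × Fin 2)
  simp [rhoQ, pauli, Matrix.one_apply, Matrix.kroneckerMap_apply] at this
  have h3 : (0:ℝ) < Real.sqrt 3 := Real.sqrt_pos.mpr (by norm_num)
  have h2 : (8:ℝ)⁻¹ + 8⁻¹ * (Real.sqrt 3 / 3) = 0 := by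
    have := congrArg Complex.re this
    simpa using this
  nlinarith

lemma Q_nonneg (x y z : Fin 2 → ℂ) :
    0 ≤ nn x * nn y * nn z - (1/Real.sqrt 3) * Tv x y z := by
  have hT := Tv_le' x y z
  have hs : (0:ℝ) < Real.sqrt 3 := Real.sqrt_pos.mpr (by norm_num)
  rw [sub_nonneg, div_mul_eq_mul_div, one_mul, div_le_iff₀ hs]
  nlinarith

lemma Q_pos (x y z : Fin 2 → ℂ) (hx : x ≠ 0) (hy : y ≠ 0) (hz : z ≠ 0) :
    0 < nn x * nn y * nn z - (1/Real.sqrt 3) * Tv x y z := by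
  have hN : 0 < nn x * nn y * nn z :=
    mul_pos (mul_pos (nn_pos x hx) (nn_pos y hy)) (nn_pos z hz)
  have hT := Tv_lt x y z hN
  have hs : (0:ℝ) < Real.sqrt 3 := Real.sqrt_pos.mpr (by norm_num)
  rw [sub_pos, div_mul_eq_mul_div, one_mul, div_lt_iff₀ hs]
  nlinarith

lemma prod3_ne {x y z : Fin 2 → ℂ} (h : prod3 x y z ≠ 0) : x ≠ 0 ∧ y ≠ 0 ∧ z ≠ 0 := by
  refine ⟨?_, ?_, ?_⟩ <;> rintro rfl <;> apply h <;> funext i <;> simp [prod3]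

end Aux

/-- the range of ω_ABC = ρ_ABC(1/√3) contains no product vector,
hence ω_ABC is not fully separable. -/
theorem stmt_14 :
    (¬ ∃ (α β γ : Fin 2 → ℂ), α ≠ 0 ∧ β ≠ 0 ∧ γ ≠ 0 ∧
      prod3 α β γ ∈ LinearMap.range (rhoQ (1 / Real.sqrt 3)).mulVecLin) ∧
    ¬ FullySepTri (rhoQ (1 / Real.sqrt 3)) := by
  constructor
  · rintro ⟨α, β, γ, hα, hβ, hγ, w, hw⟩
    rw [Matrix.mulVecLin_apply] at hw
    have hMv : (((1 : Tri 2 2 2) - (1/Real.sqrt 3) • Sig)).mulVec (prod3 α β γ) = 0 := by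
      rw [← hw, Matrix.mulVec_mulVec, hM, Matrix.zero_mulVec]
    have hz : star (prod3 α β γ) ⬝ᵥ
        (((1 : Tri 2 2 2) - (1/Real.sqrt 3) • Sig)).mulVec (prod3 α β γ) = 0 := by
      rw [hMv, dotProduct_zero]
    rw [quadM] at hz
    have hre : nn α * nn β * nn γ - (1/Real.sqrt 3) * Tv α β γ = 0 := by
      exact_mod_cast hz
    exact absurd hre (ne_of_gt (Q_pos α β γ hα hβ hγ))
  · rintro ⟨n, p, u, v, w, hp, hrep⟩
    have h0 := hM
    rw [hrep, Matrix.mul_sum] at h0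
    simp_rw [Matrix.mul_smul] at h0
    have h2 := congrArg Matrix.trace h0
    rw [Matrix.trace_sum] at h2
    simp_rw [Matrix.trace_smul, trace_mul_projV, quadM] at h2
    have h4 : ∑ i, (p i * (nn (u i) * nn (v i) * nn (w i)
        - (1/Real.sqrt 3) * Tv (u i) (v i) (w i)) : ℝ) = 0 := by
      have h5 := congrArg Complex.re h2
      simpa [Complex.re_sum, Complex.real_smul, ← Complex.ofReal_mul] using h5
    have hnz : ∃ i, p i • projV (prod3 (u i) (v i) (w i)) ≠ 0 := by
      by_contra hcon
      push_neg at hcon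
      apply rho_ne
      rw [hrep]
      exact Finset.sum_eq_zero fun i _ => hcon i
    obtain ⟨i0, hi0⟩ := hnz
    have hpi : p i0 ≠ 0 := fun h => hi0 (by simp [h])
    have hvne : prod3 (u i0) (v i0) (w i0) ≠ 0 := by
      rintro hv0
      apply hi0
      rw [hv0]
      funext a b
      simp [projV]
    obtain ⟨hu0, hv0, hw0⟩ := prod3_ne hvne
    have hQ := Q_pos (u i0) (v i0) (w i0) hu0 hv0 hw0
    have hterm : ∀ i ∈ Finset.univ, 0 ≤ (p i * (nn (u i) * nn (v i) * nn (w i)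
        - (1/Real.sqrt 3) * Tv (u i) (v i) (w i)) : ℝ) :=
      fun i _ => mul_nonneg (hp i) (Q_nonneg (u i) (v i) (w i))
    have hall := (Finset.sum_eq_zero_iff_of_nonneg hterm).mp h4 i0 (Finset.mem_univ i0)
    have : 0 < p i0 := lt_of_le_of_ne (hp i0) (Ne.symm hpi)
    nlinarith
end QMarginal
end
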